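/- arXiv:1504.08159 — 5 statements merged into one kernel-verified Lean document; each statement's English description precedes it below -/
import Mathlib

section
/- Let A ⊆ 𝕊¹×ℝ^d be a compact set (𝕊¹ = ℝ/ℤ) such that for some n ∈ ℕ and c > 0, every section A_s = {x ∈ ℝ^d : (s,x) ∈ A} has exactly n elements and any two distinct points of A_s are at distance at least c. Then there exist m ≤ n continuous functions ψ_1,…,ψ_m : ℝ → ℝ^d, each ψ_j periodic with some positive integer period τ_j, with τ_1 + ⋯ + τ_m = n, such that A = ⋃_{j=1}^m {(s mod 1, ψ_j(s)) : s ∈ [0, τ_j)}. In other words, A is the union of finitely many closed curves, each the graph of a continuous integer-periodic function. -/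
open Set

lemma iterate_ret {n : ℕ} (π : Fin n → Fin n) (hinj : Function.Injective π) (i : Fin n) :
    ∃ r : ℕ, 0 < r ∧ π^[r] i = i := by
  obtain ⟨a, b, hab, hu⟩ := Fintype.exists_ne_map_eq_of_card_lt
    (fun k : Fin (n+1) => π^[(k:ℕ)] i) (by simp)
  rcases hab.lt_or_gt with hlt | hlt
  case inl =>
    refine ⟨(b:ℕ) - (a:ℕ), by omega, ?_⟩
    have h1 : π^[(a:ℕ)] (π^[(b:ℕ)-(a:ℕ)] i) = π^[(a:ℕ)] i := by
      rw [← Function.iterate_add_apply, Nat.add_sub_cancel' (le_of_lt hlt)]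
      exact hu.symm
    exact (hinj.iterate (a:ℕ)) h1
  case inr =>
    refine ⟨(a:ℕ) - (b:ℕ), by omega, ?_⟩
    have h1 : π^[(b:ℕ)] (π^[(a:ℕ)-(b:ℕ)] i) = π^[(b:ℕ)] i := by
      rw [← Function.iterate_add_apply, Nat.add_sub_cancel' (le_of_lt hlt)]
      exact hu
    exact (hinj.iterate (b:ℕ)) h1

lemma coe_nat_circle : ∀ k : ℕ, (((k:ℝ)) : AddCircle (1:ℝ)) = 0 := by
  intro k
  induction k with
  | zero => simp
  | succ m ih => push_cast; rw [AddCircle.coe_add, ih, zero_add]; exact AddCircle.coe_period 1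

section Aux
variable {d n : ℕ} {c : ℝ}
  {A : Set (AddCircle (1 : ℝ) × EuclideanSpace ℝ (Fin d))}

variable {d n : ℕ} {c : ℝ}
  {A : Set (AddCircle (1 : ℝ) × EuclideanSpace ℝ (Fin d))}

/-- enumeration of a section -/
lemma sec_enum (hsec : ∀ s : AddCircle (1 : ℝ),
      {x | (s, x) ∈ A}.Finite ∧ {x | (s, x) ∈ A}.ncard = n) (s : AddCircle (1:ℝ)) :
    ∃ e : Fin n → EuclideanSpace ℝ (Fin d), Function.Injective e ∧
      range e = {x | (s, x) ∈ A} := by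
  obtain ⟨hfin, hcard⟩ := hsec s
  have hc : hfin.toFinset.card = n := by
    rw [Set.ncard_eq_toFinset_card _ hfin] at hcard
    exact hcard
  let E := hfin.toFinset.equivFinOfCardEq hc
  refine ⟨fun i => (E.symm i : EuclideanSpace ℝ (Fin d)), ?_, ?_⟩
  · intro i j hij
    exact E.symm.injective (Subtype.ext hij)
  · ext x
    constructor
    · rintro ⟨i, rfl⟩
      have := (E.symm i).2
      rw [Set.Finite.mem_toFinset] at this
      exact this
    · intro hx
      have hx' : x ∈ hfin.toFinset := by rwa [Set.Finite.mem_toFinset]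
      exact ⟨E ⟨x, hx'⟩, by simp⟩

lemma approx (hc : 0 < c) (hA : IsCompact A)
    (hsec : ∀ s : AddCircle (1 : ℝ),
      {x | (s, x) ∈ A}.Finite ∧ {x | (s, x) ∈ A}.ncard = n)
    (hsep : ∀ (s : AddCircle (1 : ℝ)) (x y : EuclideanSpace ℝ (Fin d)),
      (s, x) ∈ A → (s, y) ∈ A → x ≠ y → c ≤ dist x y)
    {ε : ℝ} (hε : 0 < ε) :
    ∃ δ > 0, ∀ s s' : AddCircle (1:ℝ), dist s s' < δ →
      ∀ x, (s, x) ∈ A → ∃ y, (s', y) ∈ A ∧ dist x y < ε := by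
  by_contra hcon
  push_neg at hcon
  have h : ∀ k : ℕ, ∃ s s' : AddCircle (1:ℝ), dist s s' < 1/(k+1) ∧
      ∃ x, (s, x) ∈ A ∧ ∀ y, (s', y) ∈ A → ε ≤ dist x y := by
    intro k
    obtain ⟨s, s', hd, x, hx, hy⟩ := hcon (1/(k+1)) (by positivity)
    exact ⟨s, s', hd, x, hx, hy⟩
  choose s s' hd x hx hfar using h
  choose e he1 he2 using fun k => sec_enum hsec (s' k)
  let w : ℕ → (AddCircle (1:ℝ) × EuclideanSpace ℝ (Fin d)) ×
      (Fin n → AddCircle (1:ℝ) × EuclideanSpace ℝ (Fin d)) :=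
    fun k => ((s k, x k), fun i => (s' k, e k i))
  have hC : IsCompact (A ×ˢ (Set.univ.pi fun _ : Fin n => A)) :=
    hA.prod (isCompact_univ_pi fun _ => hA)
  have hw : ∀ k, w k ∈ A ×ˢ (Set.univ.pi fun _ : Fin n => A) := by
    intro k
    refine ⟨hx k, ?_⟩
    intro i _
    show (s' k, e k i) ∈ A
    have : e k i ∈ {x | (s' k, x) ∈ A} := (he2 k) ▸ mem_range_self i
    exact this
  obtain ⟨L, hLC, φ, hφ, hconv⟩ := hC.tendsto_subseq hw
  -- component convergences
  have hconv1 : Filter.Tendsto (fun k => (w (φ k)).1) Filter.atTop (nhds L.1) :=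
    (continuous_fst.tendsto L).comp hconv
  have hconv2 : ∀ i, Filter.Tendsto (fun k => (w (φ k)).2 i) Filter.atTop (nhds (L.2 i)) :=
    fun i => ((continuous_apply i).tendsto L.2).comp ((continuous_snd.tendsto L).comp hconv)
  set σ := L.1.1
  set xinf := L.1.2
  have hsφ : Filter.Tendsto (fun k => s (φ k)) Filter.atTop (nhds σ) :=
    (continuous_fst.tendsto L.1).comp hconv1
  have hxφ : Filter.Tendsto (fun k => x (φ k)) Filter.atTop (nhds xinf) :=
    (continuous_snd.tendsto L.1).comp hconv1
  have hdist0 : Filter.Tendsto (fun k => dist (s (φ k)) (s' (φ k))) Filter.atTop (nhds 0) := by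
    apply squeeze_zero (fun k => dist_nonneg) (fun k => (hd (φ k)).le)
    have h1 : Filter.Tendsto (fun k : ℕ => 1/((k:ℝ)+1)) Filter.atTop (nhds 0) :=
      tendsto_one_div_add_atTop_nhds_zero_nat
    exact h1.comp hφ.tendsto_atTop
  have hs'φ : Filter.Tendsto (fun k => s' (φ k)) Filter.atTop (nhds σ) :=
    hsφ.congr_dist hdist0
  -- limits of the enumerations
  have heφ : ∀ i, Filter.Tendsto (fun k => e (φ k) i) Filter.atTop (nhds (L.2 i).2) :=
    fun i => (continuous_snd.tendsto (L.2 i)).comp (hconv2 i)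
  have hfstφ : ∀ i, Filter.Tendsto (fun k => s' (φ k)) Filter.atTop (nhds (L.2 i).1) :=
    fun i => (continuous_fst.tendsto (L.2 i)).comp (hconv2 i)
  have hfst : ∀ i, (L.2 i).1 = σ := fun i => tendsto_nhds_unique (hfstφ i) hs'φ
  set z : Fin n → EuclideanSpace ℝ (Fin d) := fun i => (L.2 i).2 with hz
  have hzA : ∀ i, (σ, z i) ∈ A := by
    intro i
    have : L.2 i ∈ A := hLC.2 i (mem_univ i)
    have heq : (σ, z i) = L.2 i := by
      rw [Prod.ext_iff]; exact ⟨(hfst i).symm, rfl⟩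
    rwa [heq]
  have hzsep : ∀ i j, i ≠ j → c ≤ dist (z i) (z j) := by
    intro i j hij
    have hdt : Filter.Tendsto (fun k => dist (e (φ k) i) (e (φ k) j)) Filter.atTop
        (nhds (dist (z i) (z j))) := (heφ i).dist (heφ j)
    refine le_of_tendsto_of_tendsto' tendsto_const_nhds hdt (fun k => ?_)
    refine hsep (s' (φ k)) _ _ ?_ ?_ (fun hE => hij (he1 (φ k) hE))
    · have : e (φ k) i ∈ {x | (s' (φ k), x) ∈ A} := (he2 (φ k)) ▸ mem_range_self i
      exact this
    · have : e (φ k) j ∈ {x | (s' (φ k), x) ∈ A} := (he2 (φ k)) ▸ mem_range_self j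
      exact this
  have hzinj : Function.Injective z := by
    intro i j hij
    by_contra hne
    have := hzsep i j hne
    rw [hij, dist_self] at this
    linarith
  have hrange : range z = {x | (σ, x) ∈ A} := by
    refine Set.eq_of_subset_of_ncard_le ?_ ?_ (hsec σ).1
    · rintro _ ⟨i, rfl⟩; exact hzA i
    · rw [(hsec σ).2]
      rw [← Set.image_univ, Set.ncard_image_of_injective _ hzinj, Set.ncard_univ]
      simp
  have hxinfA : (σ, xinf) ∈ A := hLC.1
  have : xinf ∈ range z := by rw [hrange]; exact hxinfA
  obtain ⟨i, hi⟩ := this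
  have hdxi : Filter.Tendsto (fun k => dist (x (φ k)) (e (φ k) i)) Filter.atTop
      (nhds (dist xinf (z i))) := hxφ.dist (heφ i)
  rw [hi, dist_self] at hdxi
  have hεle : ε ≤ 0 := by
    refine le_of_tendsto_of_tendsto' tendsto_const_nhds hdxi (fun k => ?_)
    refine hfar (φ k) _ ?_
    have : e (φ k) i ∈ {x | (s' (φ k), x) ∈ A} := (he2 (φ k)) ▸ mem_range_self i
    exact this
  linarith

lemma dist_coe_le (t t' : ℝ) : dist ((t : AddCircle (1:ℝ))) ((t' : AddCircle (1:ℝ))) ≤ dist t t' := by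
  rw [dist_eq_norm, dist_eq_norm]
  exact QuotientAddGroup.norm_mk_le_norm (m := t - t')

lemma sec_unique
    (hsep : ∀ (s : AddCircle (1 : ℝ)) (x y : EuclideanSpace ℝ (Fin d)),
      (s, x) ∈ A → (s, y) ∈ A → x ≠ y → c ≤ dist x y)
    {s : AddCircle (1:ℝ)} {x y : EuclideanSpace ℝ (Fin d)}
    (hx : (s, x) ∈ A) (hy : (s, y) ∈ A) (hd : dist x y < c) : x = y := by
  by_contra hne
  exact absurd hd (not_lt.2 (hsep s x y hx hy hne))

lemma continuousOn_union_closed {Y : Type*} [TopologicalSpace Y] {f : ℝ → Y} {s t : Set ℝ}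
    (hs : IsClosed s) (ht : IsClosed t) (hfs : ContinuousOn f s) (hft : ContinuousOn f t) :
    ContinuousOn f (s ∪ t) := by
  intro x hx
  by_cases hxs : x ∈ s <;> by_cases hxt : x ∈ t
  · exact (hfs x hxs).union (hft x hxt)
  · have htc : tᶜ ∈ nhds x := ht.isOpen_compl.mem_nhds hxt
    rw [← continuousWithinAt_inter htc]
    exact (hfs x hxs).mono (fun y hy => hy.1.resolve_right hy.2)
  · have hsc : sᶜ ∈ nhds x := hs.isOpen_compl.mem_nhds hxs
    rw [← continuousWithinAt_inter hsc]
    exact (hft x hxt).mono (fun y hy => hy.1.resolve_left hy.2)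
  · exact absurd hx (by simp [hxs, hxt])

lemma local_section (hc : 0 < c) (hA : IsCompact A)
    (hsec : ∀ s : AddCircle (1 : ℝ),
      {x | (s, x) ∈ A}.Finite ∧ {x | (s, x) ∈ A}.ncard = n)
    (hsep : ∀ (s : AddCircle (1 : ℝ)) (x y : EuclideanSpace ℝ (Fin d)),
      (s, x) ∈ A → (s, y) ∈ A → x ≠ y → c ≤ dist x y) :
    ∃ δ > 0, ∀ (t0 : ℝ) (x0 : EuclideanSpace ℝ (Fin d)), ((t0 : AddCircle (1:ℝ)), x0) ∈ A →
      ∃ g : ℝ → EuclideanSpace ℝ (Fin d), ContinuousOn g (Metric.ball t0 δ) ∧ g t0 = x0 ∧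
        ∀ t ∈ Metric.ball t0 δ, (((t : AddCircle (1:ℝ))), g t) ∈ A ∧ dist x0 (g t) < c/4 := by
  obtain ⟨δ, hδp, hδ⟩ := approx hc hA hsec hsep (ε := c/4) (by linarith)
  refine ⟨δ, hδp, ?_⟩
  intro t0 x0 hx0
  have hex : ∀ t ∈ Metric.ball t0 δ,
      ∃ y, (((t : AddCircle (1:ℝ))), y) ∈ A ∧ dist x0 y < c/4 := by
    intro t ht
    refine hδ (t0 : AddCircle (1:ℝ)) (t : AddCircle (1:ℝ)) ?_ x0 hx0
    calc dist ((t0 : AddCircle (1:ℝ))) ((t : AddCircle (1:ℝ))) ≤ dist t0 t := dist_coe_le t0 t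
    _ < δ := by rw [dist_comm]; exact Metric.mem_ball.1 ht
  classical
  set g : ℝ → EuclideanSpace ℝ (Fin d) := fun t =>
    if h : t ∈ Metric.ball t0 δ then (hex t h).choose else x0 with hgdef
  have hgspec : ∀ t (h : t ∈ Metric.ball t0 δ),
      (((t : AddCircle (1:ℝ))), g t) ∈ A ∧ dist x0 (g t) < c/4 := by
    intro t h
    have : g t = (hex t h).choose := by rw [hgdef]; simp [h]
    rw [this]
    exact (hex t h).choose_spec
  have ht0 : t0 ∈ Metric.ball t0 δ := Metric.mem_ball_self hδp
  have hg0 : g t0 = x0 := by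
    obtain ⟨hmem, hdist⟩ := hgspec t0 ht0
    exact (sec_unique hsep hx0 hmem (by rw [dist_comm] at hdist ⊢; linarith)).symm
  refine ⟨g, ?_, hg0, hgspec⟩
  intro t1 ht1
  rw [Metric.continuousWithinAt_iff]
  intro η hη
  obtain ⟨δ2, hδ2p, hδ2⟩ := approx hc hA hsec hsep (ε := min η (c/4)) (by positivity)
  refine ⟨δ2, hδ2p, ?_⟩
  intro t2 ht2 hd2
  obtain ⟨y, hyA, hyd⟩ := hδ2 (t1 : AddCircle (1:ℝ)) (t2 : AddCircle (1:ℝ))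
    (lt_of_le_of_lt (dist_coe_le t1 t2) (by rw [dist_comm]; exact hd2))
    (g t1) (hgspec t1 ht1).1
  have h1 : dist x0 y ≤ dist x0 (g t1) + dist (g t1) y := dist_triangle _ _ _
  have h2 : dist x0 y < c/2 := by
    have := (hgspec t1 ht1).2
    have := lt_of_lt_of_le hyd (min_le_right _ _)
    linarith
  have h3 : dist y (g t2) ≤ dist y x0 + dist x0 (g t2) := dist_triangle _ _ _
  have h4 : dist y (g t2) < c := by
    have := (hgspec t2 ht2).2
    rw [dist_comm] at h2
    linarith
  have hy2 : y = g t2 := sec_unique hsep hyA (hgspec t2 ht2).1 h4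
  rw [← hy2, dist_comm]
  exact lt_of_lt_of_le hyd (min_le_left _ _)

lemma extend_right {δ : ℝ} (hδp : 0 < δ)
    (hLS : ∀ (t0 : ℝ) (x0 : EuclideanSpace ℝ (Fin d)), ((t0 : AddCircle (1:ℝ)), x0) ∈ A →
      ∃ g : ℝ → EuclideanSpace ℝ (Fin d), ContinuousOn g (Metric.ball t0 δ) ∧ g t0 = x0 ∧
        ∀ t ∈ Metric.ball t0 δ, (((t : AddCircle (1:ℝ))), g t) ∈ A ∧ dist x0 (g t) < c/4)
    {p q : ℝ} (hpq : p ≤ q) {f : ℝ → EuclideanSpace ℝ (Fin d)}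
    (hf : ContinuousOn f (Icc p q))
    (hgr : ∀ t ∈ Icc p q, (((t : AddCircle (1:ℝ))), f t) ∈ A) :
    ∃ f' : ℝ → EuclideanSpace ℝ (Fin d), ContinuousOn f' (Icc p (q + δ/2)) ∧
      (∀ t ∈ Icc p q, f' t = f t) ∧
      ∀ t ∈ Icc p (q + δ/2), (((t : AddCircle (1:ℝ))), f' t) ∈ A := by
  obtain ⟨g, hgc, hgq, hgA⟩ := hLS q (f q) (hgr q ⟨hpq, le_refl q⟩)
  classical
  refine ⟨fun t => if t ≤ q then f t else g t, ?_, ?_, ?_⟩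
  · have hsplit : Icc p (q + δ/2) = Icc p q ∪ Icc q (q + δ/2) :=
      (Set.Icc_union_Icc_eq_Icc hpq (by linarith)).symm
    rw [hsplit]
    have hsub : Icc q (q + δ/2) ⊆ Metric.ball q δ := by
      intro t ht
      rw [Metric.mem_ball, Real.dist_eq, abs_of_nonneg (by linarith [ht.1])]
      linarith [ht.2]
    refine continuousOn_union_closed isClosed_Icc isClosed_Icc ?_ ?_
    · exact hf.congr (fun t ht => if_pos ht.2)
    · refine (hgc.mono hsub).congr (fun t ht => ?_)
      by_cases h : t ≤ q
      · have : t = q := le_antisymm h ht.1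
        simp [this, hgq]
      · simp [h]
  · intro t ht
    simp [ht.2]
  · intro t ht
    by_cases h : t ≤ q
    · simpa [h] using hgr t ⟨ht.1, h⟩
    · have htb : t ∈ Metric.ball q δ := by
        rw [Metric.mem_ball, Real.dist_eq, abs_of_nonneg (by linarith [not_le.1 h])]
        linarith [ht.2]
      simpa [h] using (hgA t htb).1

lemma extend_left {δ : ℝ} (hδp : 0 < δ)
    (hLS : ∀ (t0 : ℝ) (x0 : EuclideanSpace ℝ (Fin d)), ((t0 : AddCircle (1:ℝ)), x0) ∈ A →
      ∃ g : ℝ → EuclideanSpace ℝ (Fin d), ContinuousOn g (Metric.ball t0 δ) ∧ g t0 = x0 ∧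
        ∀ t ∈ Metric.ball t0 δ, (((t : AddCircle (1:ℝ))), g t) ∈ A ∧ dist x0 (g t) < c/4)
    {p q : ℝ} (hpq : p ≤ q) {f : ℝ → EuclideanSpace ℝ (Fin d)}
    (hf : ContinuousOn f (Icc p q))
    (hgr : ∀ t ∈ Icc p q, (((t : AddCircle (1:ℝ))), f t) ∈ A) :
    ∃ f' : ℝ → EuclideanSpace ℝ (Fin d), ContinuousOn f' (Icc (p - δ/2) q) ∧
      (∀ t ∈ Icc p q, f' t = f t) ∧
      ∀ t ∈ Icc (p - δ/2) q, (((t : AddCircle (1:ℝ))), f' t) ∈ A := by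
  obtain ⟨g, hgc, hgp, hgA⟩ := hLS p (f p) (hgr p ⟨le_refl p, hpq⟩)
  classical
  refine ⟨fun t => if t < p then g t else f t, ?_, ?_, ?_⟩
  · have hsplit : Icc (p - δ/2) q = Icc (p - δ/2) p ∪ Icc p q :=
      (Set.Icc_union_Icc_eq_Icc (by linarith) hpq).symm
    rw [hsplit]
    have hsub : Icc (p - δ/2) p ⊆ Metric.ball p δ := by
      intro t ht
      rw [Metric.mem_ball, Real.dist_eq, abs_of_nonpos (by linarith [ht.2])]
      linarith [ht.1]
    refine continuousOn_union_closed isClosed_Icc isClosed_Icc ?_ ?_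
    · refine (hgc.mono hsub).congr (fun t ht => ?_)
      by_cases h : t < p
      · simp [h]
      · have : t = p := le_antisymm ht.2 (not_lt.1 h)
        simp [this, hgp]
    · exact hf.congr (fun t ht => if_neg (not_lt.2 ht.1))
  · intro t ht
    simp [not_lt.2 ht.1]
  · intro t ht
    by_cases h : t < p
    · have htb : t ∈ Metric.ball p δ := by
        rw [Metric.mem_ball, Real.dist_eq, abs_of_nonpos (by linarith)]
        linarith [ht.1]
      simpa [h] using (hgA t htb).1
    · simpa [h] using hgr t ⟨not_lt.1 h, ht.2⟩

lemma global_lift (hc : 0 < c) (hA : IsCompact A)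
    (hsec : ∀ s : AddCircle (1 : ℝ),
      {x | (s, x) ∈ A}.Finite ∧ {x | (s, x) ∈ A}.ncard = n)
    (hsep : ∀ (s : AddCircle (1 : ℝ)) (x y : EuclideanSpace ℝ (Fin d)),
      (s, x) ∈ A → (s, y) ∈ A → x ≠ y → c ≤ dist x y)
    (x0 : EuclideanSpace ℝ (Fin d)) (hx0 : (((0:ℝ) : AddCircle (1:ℝ)), x0) ∈ A) :
    ∃ f : ℝ → EuclideanSpace ℝ (Fin d), Continuous f ∧ f 0 = x0 ∧
      ∀ t : ℝ, (((t : AddCircle (1:ℝ))), f t) ∈ A := by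
  obtain ⟨δ, hδp, hLS⟩ := local_section hc hA hsec hsep
  set h := δ/2 with hh
  have hhp : 0 < h := by positivity
  set Props : ℕ → (ℝ → EuclideanSpace ℝ (Fin d)) → Prop := fun K f =>
    ContinuousOn f (Icc (-(K*h)) (K*h)) ∧ f 0 = x0 ∧
      ∀ t ∈ Icc (-((K:ℝ)*h)) (K*h), (((t : AddCircle (1:ℝ))), f t) ∈ A with hProps
  have base : Props 0 (fun _ => x0) := by
    refine ⟨continuousOn_const, rfl, ?_⟩
    intro t ht
    simp only [Nat.cast_zero, zero_mul, neg_zero, Set.Icc_self, Set.mem_singleton_iff] at ht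
    rw [ht]
    exact hx0
  have step : ∀ K (f : ℝ → EuclideanSpace ℝ (Fin d)), Props K f →
      ∃ f', Props (K+1) f' ∧ ∀ t ∈ Icc (-((K:ℝ)*h)) ((K:ℝ)*h), f' t = f t := by
    intro K f hf
    have hKh : (0:ℝ) ≤ (K:ℝ)*h := by positivity
    obtain ⟨f1, hc1, he1, hg1⟩ := extend_right hδp hLS (by linarith : -((K:ℝ)*h) ≤ (K:ℝ)*h)
      hf.1 hf.2.2
    obtain ⟨f2, hc2, he2, hg2⟩ := extend_left hδp hLS
      (by linarith : -((K:ℝ)*h) ≤ (K:ℝ)*h + δ/2) hc1 hg1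
    have hend : -(((K:ℝ)+1)*h) = -((K:ℝ)*h) - δ/2 ∧ ((K:ℝ)+1)*h = (K:ℝ)*h + δ/2 := by
      constructor <;> (rw [hh]; ring)
    have hI : Icc (-(((K+1:ℕ):ℝ)*h)) (((K+1:ℕ):ℝ)*h)
        = Icc (-((K:ℝ)*h) - δ/2) ((K:ℝ)*h + δ/2) := by
      push_cast
      rw [hend.1, hend.2]
    have hsub0 : Icc (-((K:ℝ)*h)) ((K:ℝ)*h) ⊆ Icc (-((K:ℝ)*h)) ((K:ℝ)*h + δ/2) :=
      Icc_subset_Icc (le_refl _) (by linarith)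
    refine ⟨f2, ⟨?_, ?_, ?_⟩, ?_⟩
    · rw [hI]; exact hc2
    · have h0 : (0:ℝ) ∈ Icc (-((K:ℝ)*h)) ((K:ℝ)*h) := by constructor <;> linarith
      rw [he2 0 (hsub0 h0), he1 0 h0, hf.2.1]
    · intro t ht
      rw [hI] at ht
      exact hg2 t ht
    · intro t ht
      rw [he2 t (hsub0 ht), he1 t ht]
  let F : ∀ K : ℕ, {f : ℝ → EuclideanSpace ℝ (Fin d) // Props K f} := fun K =>
    Nat.rec ⟨fun _ => x0, base⟩
      (fun K ih => ⟨(step K ih.1 ih.2).choose, (step K ih.1 ih.2).choose_spec.1⟩) K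
  have hFsucc : ∀ K : ℕ, ∀ t ∈ Icc (-((K:ℝ)*h)) ((K:ℝ)*h), (F (K+1)).1 t = (F K).1 t :=
    fun K => (step K (F K).1 (F K).2).choose_spec.2
  have hmono : ∀ K K' : ℕ, K ≤ K' → ∀ t ∈ Icc (-((K:ℝ)*h)) ((K:ℝ)*h),
      (F K').1 t = (F K).1 t := by
    intro K K' hKK'
    induction K' , hKK' using Nat.le_induction with
    | base => intro t _; rfl
    | succ K' hKK' ih =>
      intro t ht
      have hsub : Icc (-((K:ℝ)*h)) ((K:ℝ)*h) ⊆ Icc (-((K':ℝ)*h)) ((K':ℝ)*h) := by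
        have : (K:ℝ)*h ≤ (K':ℝ)*h := by
          have : (K:ℝ) ≤ (K':ℝ) := by exact_mod_cast hKK'
          nlinarith
        exact Icc_subset_Icc (by linarith) this
      rw [hFsucc K' t (hsub ht), ih t ht]
  set M : ℝ → ℕ := fun t => ⌈|t|/h⌉₊ with hM
  have hMt : ∀ t : ℝ, t ∈ Icc (-((M t : ℝ)*h)) ((M t : ℝ)*h) := by
    intro t
    have h1 : |t|/h ≤ (M t : ℝ) := Nat.le_ceil _
    have h2 : |t| ≤ (M t : ℝ) * h := by
      rw [div_le_iff₀ hhp] at h1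
      linarith
    exact abs_le.1 h2
  set f : ℝ → EuclideanSpace ℝ (Fin d) := fun t => (F (M t)).1 t with hf
  have hfF : ∀ (K : ℕ) (t : ℝ), t ∈ Icc (-((K:ℝ)*h)) ((K:ℝ)*h) → f t = (F K).1 t := by
    intro K t ht
    rcases le_total (M t) K with hle | hle
    · exact (hmono (M t) K hle t (hMt t)).symm
    · exact hmono K (M t) hle t ht
  refine ⟨f, ?_, ?_, ?_⟩
  · rw [continuous_iff_continuousAt]
    intro t
    set K := M t + 1 with hK
    have htlt : |t| < (K:ℝ)*h := by
      have := (abs_le.2 (hMt t))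
      push_cast
      have h1 : |t| ≤ (M t : ℝ)*h := abs_le.2 (hMt t)
      rw [hK]; push_cast
      nlinarith
    have hnhds : Icc (-((K:ℝ)*h)) ((K:ℝ)*h) ∈ nhds t := by
      apply Icc_mem_nhds
      · have := abs_lt.1 htlt; linarith [this.1]
      · exact (abs_lt.1 htlt).2
    have hCA : ContinuousAt (F K).1 t :=
      ((F K).2.1 t (mem_of_mem_nhds hnhds)).continuousAt hnhds
    apply hCA.congr
    exact Filter.eventuallyEq_of_mem hnhds (fun t' ht' => (hfF K t' ht').symm)
  · have h0 : f 0 = (F (M 0)).1 0 := rfl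
    rw [h0, (F (M 0)).2.2.1]
  · intro t
    exact (F (M t)).2.2.2 t (hMt t)

lemma lift_unique (hc : 0 < c)
    (hsep : ∀ (s : AddCircle (1 : ℝ)) (x y : EuclideanSpace ℝ (Fin d)),
      (s, x) ∈ A → (s, y) ∈ A → x ≠ y → c ≤ dist x y)
    {f g : ℝ → EuclideanSpace ℝ (Fin d)} (hfc : Continuous f) (hgc : Continuous g)
    (hfA : ∀ t : ℝ, (((t : AddCircle (1:ℝ))), f t) ∈ A)
    (hgA : ∀ t : ℝ, (((t : AddCircle (1:ℝ))), g t) ∈ A)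
    {t0 : ℝ} (h0 : f t0 = g t0) : ∀ t, f t = g t := by
  set S := {t : ℝ | f t = g t} with hS
  have hclosed : IsClosed S := isClosed_eq hfc hgc
  have hopen : IsOpen S := by
    rw [Metric.isOpen_iff]
    intro t ht
    obtain ⟨ε1, hε1, hf1⟩ := Metric.continuousAt_iff.1 hfc.continuousAt (c/2) (by linarith)
    obtain ⟨ε2, hε2, hg1⟩ := Metric.continuousAt_iff.1 hgc.continuousAt (c/2) (by linarith)
    refine ⟨min ε1 ε2, by positivity, ?_⟩
    intro t' ht'
    rw [Metric.mem_ball] at ht'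
    have hd1 : dist (f t') (f t) < c/2 := hf1 (lt_of_lt_of_le ht' (min_le_left _ _))
    have hd2 : dist (g t') (g t) < c/2 := hg1 (lt_of_lt_of_le ht' (min_le_right _ _))
    have : dist (f t') (g t') < c := by
      have h5 := dist_triangle (f t') (f t) (g t')
      have h4 : dist (f t) (g t') = dist (g t) (g t') := by
        have : f t = g t := ht
        rw [this]
      rw [h4, dist_comm (g t) (g t')] at h5
      linarith
    exact sec_unique hsep (hfA t') (hgA t') this
  have : S = univ := IsClopen.eq_univ ⟨hclosed, hopen⟩ ⟨t0, h0⟩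
  intro t
  have : t ∈ S := this ▸ mem_univ t
  exact this

end Aux

/-- Let `A ⊆ 𝕊¹ × ℝ^d` (with `𝕊¹ = ℝ/ℤ`) be compact such that for
some `n ∈ ℕ` and `c > 0`, every section `A_s` has exactly `n` elements and any
two distinct points of `A_s` are at distance at least `c`.  Then `A` is the
union of `m ≤ n` closed curves: there are continuous functions
`ψ_1, …, ψ_m : ℝ → ℝ^d`, each periodic with a positive integer period `τ_j`,
with `τ_1 + ⋯ + τ_m = n`, such that
`A = ⋃_j {(s mod 1, ψ_j s) : s ∈ [0, τ_j)}`. -/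
theorem compact_finite_sections_union_of_periodic_graphs
    (d n : ℕ) (c : ℝ) (hc : 0 < c)
    (A : Set (AddCircle (1 : ℝ) × EuclideanSpace ℝ (Fin d)))
    (hA : IsCompact A)
    (hsec : ∀ s : AddCircle (1 : ℝ),
      {x | (s, x) ∈ A}.Finite ∧ {x | (s, x) ∈ A}.ncard = n)
    (hsep : ∀ (s : AddCircle (1 : ℝ)) (x y : EuclideanSpace ℝ (Fin d)),
      (s, x) ∈ A → (s, y) ∈ A → x ≠ y → c ≤ dist x y) :
    ∃ m : ℕ, m ≤ n ∧
      ∃ (ψ : Fin m → ℝ → EuclideanSpace ℝ (Fin d)) (τ : Fin m → ℕ),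
        (∀ j, Continuous (ψ j)) ∧
        (∀ j, 1 ≤ τ j) ∧
        (∀ j (s : ℝ), ψ j (s + τ j) = ψ j s) ∧
        (∑ j, τ j) = n ∧
        A = ⋃ j, (fun s : ℝ => ((s : AddCircle (1 : ℝ)), ψ j s)) ''
          Ico (0 : ℝ) (τ j) := by
  classical
  obtain ⟨e, heinj, herange⟩ := sec_enum hsec ((0:ℝ) : AddCircle (1:ℝ))
  have hlift : ∀ i : Fin n, ∃ f, Continuous f ∧ f 0 = e i ∧
      ∀ t:ℝ, (((t : AddCircle (1:ℝ))), f t) ∈ A := by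
    intro i
    apply global_lift hc hA hsec hsep
    have : e i ∈ {x | (((0:ℝ) : AddCircle (1:ℝ)), x) ∈ A} := herange ▸ mem_range_self i
    exact this
  choose f hfc hf0 hfA using hlift
  have hdistinct : ∀ i j : Fin n, ∀ t : ℝ, f i t = f j t → i = j := by
    intro i j t hij
    have := lift_unique hc hsep (hfc i) (hfc j) (hfA i) (hfA j) (t0 := t) hij
    exact heinj (by rw [← hf0 i, ← hf0 j]; exact this 0)
  have hsecs : ∀ t : ℝ, {x | (((t : AddCircle (1:ℝ))), x) ∈ A} = range (fun i => f i t) := by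
    intro t
    refine (Set.eq_of_subset_of_ncard_le ?_ ?_ (hsec _).1).symm
    · rintro _ ⟨i, rfl⟩; exact hfA i t
    · rw [(hsec _).2, ← Set.image_univ,
        Set.ncard_image_of_injective _ (fun i j hij => hdistinct i j t hij), Set.ncard_univ]
      simp
  have hcoe10 : ((1:ℝ) : AddCircle (1:ℝ)) = ((0:ℝ) : AddCircle (1:ℝ)) := by
    have := AddCircle.coe_add_period (1:ℝ) 0
    rwa [zero_add] at this
  have hπ : ∀ i : Fin n, ∃ j, e j = f i 1 := by
    intro i
    have h1 : (((1:ℝ) : AddCircle (1:ℝ)), f i 1) ∈ A := hfA i 1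
    rw [hcoe10] at h1
    have : f i 1 ∈ range e := herange ▸ h1
    exact this
  choose π hπe using hπ
  have hshift1 : ∀ (i : Fin n) (t : ℝ), f i (t + 1) = f (π i) t := by
    intro i
    refine lift_unique hc hsep ((hfc i).comp (continuous_add_right 1)) (hfc (π i)) ?_ (hfA (π i))
      (t0 := 0) ?_
    · intro t
      have := hfA i (t + 1)
      rwa [AddCircle.coe_add_period (1:ℝ) t] at this
    · show f i (0 + 1) = f (π i) 0
      rw [zero_add, ← hπe i, hf0 (π i)]
  have hπinj : Function.Injective π := by
    intro i j hij
    apply hdistinct i j 1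
    rw [← hπe i, ← hπe j, hij]
  have hshift : ∀ (k : ℕ) (i : Fin n) (t : ℝ), f i (t + (k:ℝ)) = f (π^[k] i) t := by
    intro k
    induction k with
    | zero => simp
    | succ m ih =>
      intro i t
      have harg : (t + ((m+1:ℕ):ℝ)) = (t + 1) + (m:ℝ) := by push_cast; ring
      rw [harg, ih i (t+1), hshift1 (π^[m] i) t, ← Function.iterate_succ_apply' π m i]
  -- orbit combinatorics
  have hrec : ∀ i : Fin n, ∃ r : ℕ, 0 < r ∧ π^[r] i = i := iterate_ret π hπinj
  set r : Fin n → ℕ := fun i => Nat.find (hrec i) with hrdef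
  have hrspec : ∀ i, 0 < r i ∧ π^[r i] i = i := fun i => Nat.find_spec (hrec i)
  have hrmin : ∀ i k, 0 < k → k < r i → π^[k] i ≠ i := by
    intro i k hk hkr he
    exact Nat.find_min (hrec i) hkr ⟨hk, he⟩
  have hmul : ∀ (i : Fin n) (q : ℕ), π^[q * r i] i = i := by
    intro i q
    induction q with
    | zero => simp
    | succ mq ih =>
      have hq : (mq+1) * r i = mq * r i + r i := by ring
      rw [hq, Function.iterate_add_apply, (hrspec i).2, ih]
  have hred : ∀ (i : Fin n) (k : ℕ), ∃ k', k' < r i ∧ π^[k'] i = π^[k] i := by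
    intro i k
    refine ⟨k % r i, Nat.mod_lt _ (hrspec i).1, ?_⟩
    conv_rhs => rw [← Nat.mod_add_div' k (r i)]
    rw [Function.iterate_add_apply, hmul i (k / r i)]
  have hequiv : Equivalence (fun i j : Fin n => ∃ k : ℕ, π^[k] i = j) := by
    refine ⟨fun i => ⟨0, rfl⟩, ?_, ?_⟩
    · rintro i j ⟨k, rfl⟩
      rcases Nat.eq_zero_or_pos k with rfl | hk
      · exact ⟨0, rfl⟩
      · refine ⟨k * r i - k, ?_⟩
        have hle : k ≤ k * r i := Nat.le_mul_of_pos_right k (hrspec i).1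
        rw [← Function.iterate_add_apply, Nat.sub_add_cancel hle, hmul i k]
    · rintro i j l ⟨k1, rfl⟩ ⟨k2, rfl⟩
      exact ⟨k2 + k1, Function.iterate_add_apply π k2 k1 i⟩
  let sd : Setoid (Fin n) := ⟨_, hequiv⟩
  haveI : Fintype (Quotient sd) := Fintype.ofFinite _
  set m := Fintype.card (Quotient sd) with hm
  have hmn : m ≤ n := by
    have hsurj : Function.Surjective (Quotient.mk sd) := fun q => q.exists_rep
    have := Fintype.card_le_of_surjective _ hsurj
    simpa using this
  let σ : Fin m ≃ Quotient sd := (Fintype.equivFin (Quotient sd)).symm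
  let rep : Quotient sd → Fin n := fun q => q.out
  have hrep : ∀ q, Quotient.mk sd (rep q) = q := fun q => q.out_eq
  -- injectivity of the orbit enumeration
  have horbinj : ∀ i0 : Fin n, Function.Injective
      (fun k : Fin (r i0) => π^[(k:ℕ)] i0) := by
    intro i0 a b hab
    by_contra hne
    have hne' : (a:ℕ) ≠ (b:ℕ) := fun h => hne (Fin.ext h)
    rcases hne'.lt_or_gt with hlt | hlt
    · have h1 : π^[(a:ℕ)] (π^[(b:ℕ)-(a:ℕ)] i0) = π^[(a:ℕ)] i0 := by
        rw [← Function.iterate_add_apply, Nat.add_sub_cancel' (le_of_lt hlt)]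
        exact hab.symm
      have h2 : π^[(b:ℕ)-(a:ℕ)] i0 = i0 := (hπinj.iterate (a:ℕ)) h1
      exact hrmin i0 _ (by omega) (by omega) h2
    · have h1 : π^[(b:ℕ)] (π^[(a:ℕ)-(b:ℕ)] i0) = π^[(b:ℕ)] i0 := by
        rw [← Function.iterate_add_apply, Nat.add_sub_cancel' (le_of_lt hlt)]
        exact hab
      have h2 : π^[(a:ℕ)-(b:ℕ)] i0 = i0 := (hπinj.iterate (b:ℕ)) h1
      exact hrmin i0 _ (by omega) (by omega) h2
  have hcards : ∀ q : Quotient sd,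
      (Finset.univ.filter (fun i => Quotient.mk sd i = q)).card = r (rep q) := by
    intro q
    have himg : Finset.univ.filter (fun i => Quotient.mk sd i = q)
        = Finset.image (fun k : Fin (r (rep q)) => π^[(k:ℕ)] (rep q)) Finset.univ := by
      ext i
      simp only [Finset.mem_filter, Finset.mem_univ, true_and, Finset.mem_image]
      constructor
      · intro hi
        have heq : Quotient.mk sd (rep q) = Quotient.mk sd i := by rw [hrep q, hi]
        obtain ⟨k, hk⟩ := Quotient.exact heq
        obtain ⟨k', hk'lt, hk'e⟩ := hred (rep q) k
        refine ⟨⟨k', hk'lt⟩, ?_⟩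
        show π^[((⟨k', hk'lt⟩ : Fin (r (rep q))):ℕ)] (rep q) = i
        rw [show ((⟨k', hk'lt⟩ : Fin (r (rep q))):ℕ) = k' from rfl, hk'e, hk]
      · rintro ⟨k, rfl⟩
        exact (Quotient.sound (hequiv.symm ⟨(k:ℕ), rfl⟩)).trans (hrep q)
    rw [himg, Finset.card_image_of_injective _ (horbinj (rep q)), Finset.card_univ,
      Fintype.card_fin]
  refine ⟨m, hmn, fun j => f (rep (σ j)), fun j => r (rep (σ j)), ?_, ?_, ?_, ?_, ?_⟩
  · intro j; exact hfc _
  · intro j; exact (hrspec _).1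
  · intro j s
    show f (rep (σ j)) (s + ((r (rep (σ j)) : ℕ) : ℝ)) = f (rep (σ j)) s
    rw [hshift (r (rep (σ j))) (rep (σ j)) s, (hrspec _).2]
  · have h1 : ∑ j : Fin m, r (rep (σ j)) = ∑ q : Quotient sd, r (rep q) :=
      Equiv.sum_comp σ (fun q => r (rep q))
    have h2 := Finset.card_eq_sum_card_fiberwise
      (f := fun i : Fin n => Quotient.mk sd i) (s := Finset.univ) (t := Finset.univ)
      (fun x _ => Finset.mem_univ _)
    rw [Finset.card_univ, Fintype.card_fin] at h2
    rw [h1]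
    have h3 : ∑ q : Quotient sd, r (rep q)
        = ∑ q : Quotient sd, (Finset.filter (fun i => Quotient.mk sd i = q) Finset.univ).card :=
      Finset.sum_congr rfl (fun q _ => (hcards q).symm)
    rw [h3]
    exact h2.symm
  · ext p
    simp only [mem_iUnion, mem_image]
    constructor
    · intro hp
      haveI : Fact ((0:ℝ) < 1) := ⟨one_pos⟩
      obtain ⟨s, x⟩ := p
      have hrepr : ∃ t : ℝ, t ∈ Ico (0:ℝ) 1 ∧ (t : AddCircle (1:ℝ)) = s := by
        refine ⟨AddCircle.equivIco 1 0 s, by simpa using (AddCircle.equivIco 1 0 s).2, ?_⟩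
        exact (AddCircle.equivIco 1 0).symm_apply_apply s
      obtain ⟨t, ht01, hts⟩ := hrepr
      have hx : x ∈ {x | (((t : AddCircle (1:ℝ))), x) ∈ A} := by
        rw [mem_setOf_eq, hts]; exact hp
      rw [hsecs t] at hx
      obtain ⟨i, hi⟩ := hx
      obtain ⟨k, hk⟩ := Quotient.exact (hrep (Quotient.mk sd i))
      obtain ⟨k', hk'lt, hk'e⟩ := hred (rep (Quotient.mk sd i)) k
      have hki : π^[k'] (rep (Quotient.mk sd i)) = i := by rw [hk'e, hk]
      refine ⟨σ.symm (Quotient.mk sd i), t + (k':ℝ), ⟨?_, ?_⟩, ?_⟩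
      · have := ht01.1
        positivity
      · have hcast : (k' : ℝ) + 1 ≤ (r (rep (Quotient.mk sd i)) : ℝ) := by exact_mod_cast hk'lt
        have hrw : rep (σ (σ.symm (Quotient.mk sd i))) = rep (Quotient.mk sd i) := by
          rw [Equiv.apply_symm_apply]
        rw [hrw]
        have := ht01.2
        linarith
      · have hrw : rep (σ (σ.symm (Quotient.mk sd i))) = rep (Quotient.mk sd i) := by
          rw [Equiv.apply_symm_apply]
        rw [hrw]
        have hfst : ((t + (k':ℝ) : ℝ) : AddCircle (1:ℝ)) = s := by
          rw [AddCircle.coe_add, coe_nat_circle k', add_zero, hts]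
        have hsnd : f (rep (Quotient.mk sd i)) (t + (k':ℝ)) = x := by
          rw [hshift k' (rep (Quotient.mk sd i)) t, hki]
          exact hi
        rw [hfst, hsnd]
    · rintro ⟨j, t, _, rfl⟩
      exact hfA (rep (σ j)) t
end

section
/- Let φ be a discrete-time RDS over θ on a Polish metric space X with skew product Θ, let (Φ_n) be a sequence of bounded random continuous functions that is subadditive with respect to Θ, and let μ_k (k ∈ ℕ) and μ be probability measures on Ω×X, each invariant under Θ and with marginal ℙ on Ω. If ∫ f dμ_k → ∫ f dμ for every bounded f : Ω×X → ℝ that is measurable in ω and continuous in x, then limsup_{k→∞} λ(μ_k,φ) ≤ λ(μ,φ); that is, the function μ ↦ λ(μ,φ) is upper semi-continuous on the set of Θ-invariant probability measures with marginal ℙ. -/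
open MeasureTheory Metric Function Filter

/-- For a subadditive sequence `(Φ n)` of bounded random continuous
functions over the skew product `Θ` of a discrete-time RDS, the function
`μ ↦ λ(μ,φ)` is upper semi-continuous on the set of `Θ`-invariant probability
measures with marginal `ℙ`: if `∫ f dμ_k → ∫ f dμ` for every bounded `f`
measurable in `ω` and continuous in `x`, then `limsup_k λ(μ_k,φ) ≤ λ(μ,φ)`. -/
theorem lambda_upper_semicontinuous
    {Ω X : Type*} [MeasurableSpace Ω] [MetricSpace X] [PolishSpace X]
    [MeasurableSpace X] [BorelSpace X]
    (ℙ : Measure Ω) [IsProbabilityMeasure ℙ]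
    (θ : Ω → Ω) (hθ : MeasurePreserving θ ℙ ℙ)
    (φ : ℕ → Ω → X → X)
    (hφmeas : Measurable fun p : ℕ × Ω × X => φ p.1 p.2.1 p.2.2)
    (hφ0 : ∀ ω, φ 0 ω = id)
    (hcocycle : ∀ (n m : ℕ) (ω : Ω), φ (n + m) ω = (φ n (θ^[m] ω)) ∘ (φ m ω))
    (hφcont : ∀ n ω, Continuous (φ n ω))
    (Φ : ℕ → Ω → X → ℝ)
    (hΦmeas : ∀ n x, Measurable fun ω => Φ n ω x)
    (hΦcont : ∀ n ω, Continuous (Φ n ω))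
    (hΦbdd : ∀ n, ∃ M : ℝ, ∀ ω x, |Φ n ω x| ≤ M)
    (hsub : ∀ (n m : ℕ) (ω : Ω) (x : X),
      Φ (n + m) ω x ≤ Φ m ω x + Φ n (θ^[m] ω) (φ m ω x))
    (μseq : ℕ → Measure (Ω × X)) (μ : Measure (Ω × X))
    (hμseqprob : ∀ k, IsProbabilityMeasure (μseq k)) (hμprob : IsProbabilityMeasure μ)
    (hμseqinv : ∀ k, (μseq k).map (fun p : Ω × X => (θ p.1, φ 1 p.1 p.2)) = μseq k)
    (hμinv : μ.map (fun p : Ω × X => (θ p.1, φ 1 p.1 p.2)) = μ)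
    (hμseqmarg : ∀ k, (μseq k).map Prod.fst = ℙ) (hμmarg : μ.map Prod.fst = ℙ)
    (hconv : ∀ f : Ω × X → ℝ,
      (∀ x : X, Measurable fun ω => f (ω, x)) → (∀ ω : Ω, Continuous fun x => f (ω, x)) →
      (∃ M : ℝ, ∀ p, |f p| ≤ M) →
      Tendsto (fun k => ∫ p, f p ∂(μseq k)) atTop (nhds (∫ p, f p ∂μ)))
    (L : ℕ → ℝ) (Lμ : ℝ)
    (hL : ∀ k, Tendsto (fun n : ℕ => (n : ℝ)⁻¹ * ∫ p, Φ n p.1 p.2 ∂(μseq k))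
      atTop (nhds (L k)))
    (hLμ : Tendsto (fun n : ℕ => (n : ℝ)⁻¹ * ∫ p, Φ n p.1 p.2 ∂μ)
      atTop (nhds Lμ)) :
    limsup (fun k => (L k : EReal)) atTop ≤ (Lμ : EReal) := by
  classical
  -- the skew product map
  set T : Ω × X → Ω × X := fun p => (θ p.1, φ 1 p.1 p.2) with hTdef
  have hφm : ∀ n, Measurable (fun p : Ω × X => φ n p.1 p.2) := fun n =>
    hφmeas.comp (measurable_const.prodMk measurable_id)
  have hTmeas : Measurable T :=
    (hθ.measurable.comp measurable_fst).prodMk (hφm 1)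
  -- iterates of T
  have hTiter : ∀ m (p : Ω × X), T^[m] p = (θ^[m] p.1, φ m p.1 p.2) := by
    intro m
    induction m with
    | zero => intro p; simp [hφ0]
    | succ m ih =>
      intro p
      rw [Function.iterate_succ_apply', ih]
      have hc := congrFun (hcocycle 1 m p.1) p.2
      simp only [Function.comp_apply] at hc
      simp only [hTdef]
      rw [Function.iterate_succ_apply']
      have : (1 : ℕ) + m = m + 1 := Nat.add_comm 1 m
      rw [this] at hc
      rw [hc]
  -- joint strong measurability of Φ n
  have hΦsm : ∀ n, StronglyMeasurable (fun p : Ω × X => Φ n p.1 p.2) := by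
    intro n
    have h := measurable_uncurry_of_continuous_of_measurable
      (u := fun x ω => Φ n ω x) (fun ω => (hΦcont n ω)) (fun x => hΦmeas n x)
    have : (fun p : Ω × X => Φ n p.1 p.2)
        = Function.uncurry (fun x ω => Φ n ω x) ∘ Prod.swap := rfl
    rw [this]
    exact (h.comp measurable_swap).stronglyMeasurable
  -- integrability
  have hint : ∀ n (ν : Measure (Ω × X)) [IsProbabilityMeasure ν],
      Integrable (fun p : Ω × X => Φ n p.1 p.2) ν := by
    intro n ν _
    obtain ⟨M, hM⟩ := hΦbdd n
    refine ⟨(hΦsm n).aestronglyMeasurable, ?_⟩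
    exact HasFiniteIntegral.of_bounded (C := M)
      (Filter.Eventually.of_forall fun p => by
        simpa using hM p.1 p.2)
  -- invariance of μseq k under T^[m]
  have hinv_iter : ∀ k m, (μseq k).map (T^[m]) = μseq k := by
    intro k m
    induction m with
    | zero => simp
    | succ m ih =>
      rw [Function.iterate_succ', ← Measure.map_map hTmeas (hTmeas.iterate m), ih]
      exact hμseqinv k
  -- subadditivity of a k n := ∫ Φ n dμ_k
  set a : ℕ → ℕ → ℝ := fun k n => ∫ p, Φ n p.1 p.2 ∂(μseq k) with hadef
  have hasub : ∀ k n m, a k (n + m) ≤ a k n + a k m := by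
    intro k n m
    haveI := hμseqprob k
    have h1 : a k (n + m) ≤ ∫ p, (Φ m p.1 p.2 + Φ n (T^[m] p).1 (T^[m] p).2) ∂(μseq k) := by
      refine integral_mono (hint _ _) ?_ ?_
      · refine Integrable.add (hint _ _) ?_
        have h0 : Integrable (fun p : Ω × X => Φ n p.1 p.2) ((μseq k).map (T^[m])) := by
          rw [hinv_iter k m]; exact hint n (μseq k)
        exact h0.comp_measurable (hTmeas.iterate m)
      · intro p
        have := hsub n m p.1 p.2
        simpa [hTiter m p] using this
    have h2 : ∫ p, (Φ m p.1 p.2 + Φ n (T^[m] p).1 (T^[m] p).2) ∂(μseq k)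
        = a k m + ∫ p, Φ n (T^[m] p).1 (T^[m] p).2 ∂(μseq k) := by
      have h0 : Integrable (fun p : Ω × X => Φ n p.1 p.2) ((μseq k).map (T^[m])) := by
        rw [hinv_iter k m]; exact hint n (μseq k)
      exact integral_add (hint _ _) (h0.comp_measurable (hTmeas.iterate m))
    have h3 : ∫ p, Φ n (T^[m] p).1 (T^[m] p).2 ∂(μseq k) = a k n := by
      have := integral_map (μ := μseq k) (hTmeas.iterate m).aemeasurable
        (f := fun p : Ω × X => Φ n p.1 p.2)
        (by rw [hinv_iter k m]; exact (hΦsm n).aestronglyMeasurable)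
      rw [hinv_iter k m] at this
      exact this.symm
    rw [h2, h3] at h1
    linarith
  -- a k (m*n) ≤ m * a k n for m ≥ 1
  have hamul : ∀ k n m, 1 ≤ m → a k (m * n) ≤ (m : ℝ) * a k n := by
    intro k n m hm
    induction m with
    | zero => omega
    | succ m ih =>
      rcases Nat.eq_or_lt_of_le hm with h | h
      · simp [← h]
      · have hm1 : 1 ≤ m := by omega
        have := hasub k n (m * n)
        have := ih hm1
        have hmn : (m + 1) * n = n + m * n := by ring
        rw [hmn]
        push_cast
        calc a k (n + m * n) ≤ a k n + a k (m * n) := hasub k n (m * n)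
          _ ≤ a k n + (m : ℝ) * a k n := by linarith
          _ = ((m : ℝ) + 1) * a k n := by ring
  -- hence L k ≤ n⁻¹ * a k n for n ≥ 1
  have hLle : ∀ (k : ℕ) (n : ℕ), 1 ≤ n → L k ≤ (n : ℝ)⁻¹ * a k n := by
    intro k n hn
    have hmono : Tendsto (fun m : ℕ => m * n) atTop atTop :=
      tendsto_atTop_atTop_of_monotone (fun i j hij => Nat.mul_le_mul_right n hij)
        (fun b => ⟨b, Nat.le_mul_of_pos_right b (by omega)⟩)
    have htend : Tendsto (fun m : ℕ => ((m * n : ℕ) : ℝ)⁻¹ * a k (m * n)) atTop (nhds (L k)) :=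
      (hL k).comp hmono
    refine le_of_tendsto htend ?_
    filter_upwards [eventually_ge_atTop 1] with m hm
    have hm0 : (0 : ℝ) < (m : ℝ) := by exact_mod_cast Nat.lt_of_lt_of_le Nat.zero_lt_one hm
    have hn0 : (0 : ℝ) < (n : ℝ) := by exact_mod_cast Nat.lt_of_lt_of_le Nat.zero_lt_one hn
    have h1 : a k (m * n) ≤ (m : ℝ) * a k n := hamul k n m hm
    have h2 : ((m * n : ℕ) : ℝ)⁻¹ * a k (m * n) ≤ ((m : ℝ) * (n : ℝ))⁻¹ * ((m : ℝ) * a k n) := by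
      push_cast
      exact mul_le_mul_of_nonneg_left h1 (by positivity)
    refine h2.trans_eq ?_
    field_simp
  -- limsup L k ≤ n⁻¹ ∫ Φ n dμ for n ≥ 1
  have hkey : ∀ n : ℕ, 1 ≤ n →
      limsup (fun k => (L k : EReal)) atTop ≤ (((n : ℝ)⁻¹ * ∫ p, Φ n p.1 p.2 ∂μ : ℝ) : EReal) := by
    intro n hn
    obtain ⟨M, hM⟩ := hΦbdd n
    have hconvn : Tendsto (fun k => (((n : ℝ)⁻¹ * a k n : ℝ) : EReal)) atTop
        (nhds (((n : ℝ)⁻¹ * ∫ p, Φ n p.1 p.2 ∂μ : ℝ) : EReal)) := by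
      refine EReal.tendsto_coe.mpr ?_
      exact (hconv (fun p => Φ n p.1 p.2) (hΦmeas n) (hΦcont n)
        ⟨M, fun p => hM p.1 p.2⟩).const_mul ((n:ℝ)⁻¹)
    calc limsup (fun k => (L k : EReal)) atTop
        ≤ limsup (fun k => (((n : ℝ)⁻¹ * a k n : ℝ) : EReal)) atTop := by
          refine limsup_le_limsup ?_
          exact Filter.Eventually.of_forall fun k =>
            EReal.coe_le_coe_iff.mpr (hLle k n hn)
      _ = (((n : ℝ)⁻¹ * ∫ p, Φ n p.1 p.2 ∂μ : ℝ) : EReal) := hconvn.limsup_eq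
  -- conclude
  have hLμ' : Tendsto (fun n : ℕ => (((n : ℝ)⁻¹ * ∫ p, Φ n p.1 p.2 ∂μ : ℝ) : EReal)) atTop
      (nhds ((Lμ : ℝ) : EReal)) := EReal.tendsto_coe.mpr hLμ
  refine ge_of_tendsto hLμ' ?_
  filter_upwards [eventually_ge_atTop 1] with n hn using hkey n hn
end

section
/- Let E be a compact metric space and K a random compact set in E×ℝ^d over (Ω,𝓕). For each ω ∈ Ω and s ∈ E set K(ω,s) := {x ∈ ℝ^d : (s,x) ∈ K(ω)}. Then the sections define a random compact set over the base (Ω×E, 𝓕⊗𝓑(E)): every K(ω,s) is a compact (possibly empty) subset of ℝ^d, and (ω,s) ↦ dist(x, K(ω,s)) is 𝓕⊗𝓑(E)-measurable for every x ∈ ℝ^d (with dist(x,∅) := +∞). Moreover, if η : Ω×E → E with each η(ω,·) a homeomorphism and φ : ℕ×Ω×E×ℝ^d → ℝ^d is a cocycle over θ×η such that (s,x) ↦ (η(ω,s), φ(1,ω,s,x)) maps K(ω) onto K(θω) for ℙ-a.e. ω, then φ(k,ω,s)(K(ω,s)) = K((θ×η)^k(ω,s)) for ℙ-a.e. ω ∈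 Ω, all s ∈ E and all k ∈ ℕ. -/
open MeasureTheory Metric Function Set
open scoped ENNReal

section auxRCS

variable {Ω : Type*} [MeasurableSpace Ω] {X : Type*} [MetricSpace X]
  [TopologicalSpace.SeparableSpace X]

lemma aux_measurable_hit (K : Ω → Set X) (hKne : ∀ ω, (K ω).Nonempty)
    (hKmeas : ∀ p : X, Measurable fun ω => infDist p (K ω))
    {U : Set X} (hU : IsOpen U) :
    MeasurableSet {ω | (K ω ∩ U).Nonempty} := by
  obtain ⟨D, hDc, hDd⟩ := TopologicalSpace.exists_countable_dense X
  have key : {ω | (K ω ∩ U).Nonempty}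
      = ⋃ p ∈ D, ⋃ r ∈ {r : ℚ | 0 < (r : ℝ) ∧ ball p (r : ℝ) ⊆ U},
          {ω | infDist p (K ω) < (r : ℝ)} := by
    ext ω
    simp only [mem_setOf_eq, mem_iUnion, exists_prop]
    constructor
    · rintro ⟨q, hqK, hqU⟩
      obtain ⟨ε, hε, hball⟩ := Metric.isOpen_iff.1 hU q hqU
      obtain ⟨r, hr0, hrε⟩ := exists_rat_btwn (half_pos hε)
      obtain ⟨p, hpD, hpq⟩ := hDd.exists_dist_lt q (show (0:ℝ) < r from hr0)
      refine ⟨p, hpD, r, ⟨hr0, ?_⟩, ?_⟩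
      · intro z hz
        apply hball
        have h1 : dist z q ≤ dist z p + dist p q := dist_triangle _ _ _
        have h2 : dist p q < (r : ℝ) := by rwa [dist_comm] at hpq
        have : dist z q < 2 * (r : ℝ) := by
          rw [mem_ball] at hz; linarith
        exact mem_ball.2 (by linarith)
      · exact lt_of_le_of_lt (infDist_le_dist_of_mem hqK) (by rwa [dist_comm] at hpq)
    · rintro ⟨p, hpD, r, ⟨hr0, hrU⟩, hinf⟩
      obtain ⟨q, hqK, hq⟩ := (Metric.infDist_lt_iff (hKne ω)).1 hinf
      exact ⟨q, hqK, hrU (mem_ball.2 (by rwa [dist_comm]))⟩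
  rw [key]
  refine MeasurableSet.biUnion hDc fun p _ =>
    MeasurableSet.biUnion (Set.to_countable _) fun r _ => ?_
  exact measurableSet_lt (hKmeas p) measurable_const

lemma aux_measurable_iInf (K : Ω → Set X) (hKne : ∀ ω, (K ω).Nonempty)
    (hKmeas : ∀ p : X, Measurable fun ω => infDist p (K ω))
    (g : X → ℝ≥0∞) (hg : Continuous g) :
    Measurable fun ω => ⨅ q ∈ K ω, g q := by
  apply measurable_of_Iio
  intro t
  have key : (fun ω => ⨅ q ∈ K ω, g q) ⁻¹' Iio t
      = {ω | (K ω ∩ g ⁻¹' Iio t).Nonempty} := by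
    ext ω
    rw [mem_preimage, mem_Iio]
    simp only [iInf_lt_iff]
    exact ⟨fun ⟨q, h1, h2⟩ => ⟨q, h1, h2⟩, fun ⟨q, h1, h2⟩ => ⟨q, h1, h2⟩⟩
  rw [key]
  exact aux_measurable_hit K hKne hKmeas (isOpen_Iio.preimage hg)

end auxRCS

lemma aux_minimax {X : Type*} [TopologicalSpace X] [T2Space X] {K : Set X}
    (hK : IsCompact K) (hne : K.Nonempty) (f : ℕ → X → ℝ≥0∞)
    (hf : ∀ n, Continuous (f n)) (hmono : ∀ n q, f n q ≤ f (n + 1) q) :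
    ⨆ n, ⨅ q ∈ K, f n q = ⨅ q ∈ K, ⨆ n, f n q := by
  apply le_antisymm
  · exact iSup_le fun n => le_iInf₂ fun q hq =>
      (iInf₂_le q hq).trans (le_iSup (fun m => f m q) n)
  · set L := ⨆ n, ⨅ q ∈ K, f n q with hL
    set C : ℕ → Set X := fun n => K ∩ {q | f n q ≤ L} with hC
    have hCne : ∀ n, (C n).Nonempty := by
      intro n
      obtain ⟨m, hmK, hm⟩ := hK.exists_isMinOn hne (hf n).continuousOn
      refine ⟨m, hmK, ?_⟩
      calc f n m ≤ ⨅ q ∈ K, f n q := le_iInf₂ fun q hq => hm hq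
        _ ≤ L := le_iSup (fun k => ⨅ q ∈ K, f k q) n
    have hCclosed : ∀ n, IsClosed (C n) := fun n =>
      hK.isClosed.inter (isClosed_le (hf n) continuous_const)
    have hCmono : ∀ n, C (n + 1) ⊆ C n := fun n q hq =>
      ⟨hq.1, (hmono n q).trans hq.2⟩
    obtain ⟨q, hq⟩ := IsCompact.nonempty_iInter_of_sequence_nonempty_isCompact_isClosed
      C hCmono hCne (hK.inter_right (isClosed_le (hf 0) continuous_const)) hCclosed
    simp only [mem_iInter] at hq
    have hqK : q ∈ K := (hq 0).1
    exact (iInf₂_le q hqK).trans (iSup_le fun n => (hq n).2)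

lemma aux_formula {E V : Type*} [MetricSpace E] [MetricSpace V]
    {K : Set (E × V)} (hK : IsCompact K) (hne : K.Nonempty) (s : E) (x : V) :
    EMetric.infEdist x {y | (s, y) ∈ K}
      = ⨆ n : ℕ, ⨅ q ∈ K, (edist x q.2 + (n : ℝ≥0∞) * edist s q.1) := by
  have hf : ∀ n : ℕ, Continuous fun q : E × V => edist x q.2 + (n : ℝ≥0∞) * edist s q.1 := by
    intro n
    exact (continuous_const.edist continuous_snd).add
      ((ENNReal.continuous_const_mul (by simp)).comp (continuous_const.edist continuous_fst))
  have hmono : ∀ (n : ℕ) (q : E × V),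
      edist x q.2 + (n : ℝ≥0∞) * edist s q.1
        ≤ edist x q.2 + ((n + 1 : ℕ) : ℝ≥0∞) * edist s q.1 := by
    intro n q
    exact add_le_add_right (mul_le_mul_left (by exact_mod_cast Nat.le_succ n) _) _
  rw [aux_minimax hK hne _ hf hmono]
  apply le_antisymm
  · refine le_iInf₂ fun q hq => ?_
    by_cases h : q.1 = s
    · have hq2 : (s, q.2) ∈ K := by rw [← h]; exact hq
      refine le_iSup_of_le 0 ?_
      simpa [EMetric.infEdist] using EMetric.infEdist_le_edist_of_mem (show q.2 ∈ {y | (s, y) ∈ K} from hq2)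
    · have he : edist s q.1 ≠ 0 := by
        simp only [ne_eq, edist_eq_zero]
        exact fun hs => h hs.symm
      have htop : ⨆ n : ℕ, (n : ℝ≥0∞) * edist s q.1 = ⊤ := by
        rw [← ENNReal.iSup_mul, ENNReal.iSup_natCast, ENNReal.top_mul he]
      calc EMetric.infEdist x {y | (s, y) ∈ K} ≤ ⊤ := le_top
        _ = ⨆ n : ℕ, (n : ℝ≥0∞) * edist s q.1 := htop.symm
        _ ≤ ⨆ n : ℕ, (edist x q.2 + (n : ℝ≥0∞) * edist s q.1) :=
          iSup_mono fun n => le_add_self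
  · rw [EMetric.infEdist, EMetric.le_infEdist]
    intro y hy
    refine iInf₂_le_of_le (s, y) hy ?_
    exact iSup_le fun n => by simp [edist_self]

lemma aux_joint_meas {Ω E V : Type*} [MeasurableSpace Ω] [MetricSpace E]
    [MeasurableSpace E] [OpensMeasurableSpace E]
    [TopologicalSpace.SeparableSpace E] [Nonempty E] [MetricSpace V]
    [TopologicalSpace.SeparableSpace V]
    (K : Ω → Set (E × V)) (hKne : ∀ ω, (K ω).Nonempty)
    (hKmeas : ∀ p : E × V, Measurable fun ω => infDist p (K ω))
    (x : V) (n : ℕ) :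
    Measurable fun p : Ω × E =>
      ⨅ q ∈ K p.1, (edist x q.2 + (n : ℝ≥0∞) * edist p.2 q.1) := by
  set Gn : Ω → E → ℝ≥0∞ :=
    fun ω s => ⨅ q ∈ K ω, (edist x q.2 + (n : ℝ≥0∞) * edist s q.1) with hGn
  have hcont : ∀ s : E,
      Continuous fun q : E × V => edist x q.2 + (n : ℝ≥0∞) * edist s q.1 := by
    intro s
    exact (continuous_const.edist continuous_snd).add
      ((ENNReal.continuous_const_mul (by simp)).comp (continuous_const.edist continuous_fst))
  have lip : ∀ (ω : Ω) (s s' : E), Gn ω s ≤ Gn ω s' + (n : ℝ≥0∞) * edist s s' := by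
    intro ω s s'
    have hpt : ∀ q : E × V,
        edist x q.2 + (n : ℝ≥0∞) * edist s q.1
          ≤ (edist x q.2 + (n : ℝ≥0∞) * edist s' q.1) + (n : ℝ≥0∞) * edist s s' := by
      intro q
      calc edist x q.2 + (n : ℝ≥0∞) * edist s q.1
          ≤ edist x q.2 + (n : ℝ≥0∞) * (edist s s' + edist s' q.1) :=
            add_le_add_right (mul_le_mul_right (edist_triangle _ _ _) _) _
        _ = (edist x q.2 + (n : ℝ≥0∞) * edist s' q.1) + (n : ℝ≥0∞) * edist s s' := by
            ring
    have hsum : Gn ω s' + (n : ℝ≥0∞) * edist s s'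
        = ⨅ q ∈ K ω,
            ((edist x q.2 + (n : ℝ≥0∞) * edist s' q.1) + (n : ℝ≥0∞) * edist s s') := by
      rw [hGn]
      simp only [iInf_subtype']
      rw [ENNReal.iInf_add]
    rw [hsum]
    exact le_iInf₂ fun q hq => (iInf₂_le q hq).trans (hpt q)
  obtain ⟨D, hDc, hDd⟩ := TopologicalSpace.exists_countable_dense E
  have hDne : D.Nonempty := hDd.nonempty
  have repr : ∀ (ω : Ω) (s : E),
      Gn ω s = ⨅ s' ∈ D, (Gn ω s' + (n : ℝ≥0∞) * edist s s') := by
    intro ω s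
    apply le_antisymm
    · exact le_iInf₂ fun s' _ => lip ω s s'
    · apply ENNReal.le_of_forall_pos_le_add
      intro ε hε _
      have hεR : (0 : ℝ) < (ε : ℝ) := hε
      set δ : ℝ := (ε : ℝ) / (2 * ((n : ℝ) + 1)) with hδdef
      have hδ : 0 < δ := by positivity
      obtain ⟨s', hs'D, hss'⟩ := hDd.exists_dist_lt s hδ
      have hbound : (n : ℝ≥0∞) * edist s s' ≤ ENNReal.ofReal ((ε : ℝ) / 2) := by
        rw [edist_dist, ← ENNReal.ofReal_natCast n,
          ← ENNReal.ofReal_mul (Nat.cast_nonneg n)]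
        apply ENNReal.ofReal_le_ofReal
        have h1 : (n : ℝ) * dist s s' ≤ (n : ℝ) * δ :=
          mul_le_mul_of_nonneg_left hss'.le (Nat.cast_nonneg n)
        have h2 : (n : ℝ) * δ ≤ (ε : ℝ) / 2 := by
          rw [hδdef, ← mul_div_assoc]
          rw [div_le_div_iff₀ (by positivity) (by positivity)]
          nlinarith [Nat.cast_nonneg (α := ℝ) n]
        linarith
      calc ⨅ s'' ∈ D, (Gn ω s'' + (n : ℝ≥0∞) * edist s s'')
          ≤ Gn ω s' + (n : ℝ≥0∞) * edist s s' := iInf₂_le s' hs'D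
        _ ≤ (Gn ω s + (n : ℝ≥0∞) * edist s' s) + (n : ℝ≥0∞) * edist s s' :=
            add_le_add_left (lip ω s' s) _
        _ = Gn ω s + ((n : ℝ≥0∞) * edist s s' + (n : ℝ≥0∞) * edist s s') := by
            rw [edist_comm s' s]; ring
        _ ≤ Gn ω s + (ENNReal.ofReal ((ε : ℝ) / 2) + ENNReal.ofReal ((ε : ℝ) / 2)) :=
            add_le_add_right (add_le_add hbound hbound) _
        _ = Gn ω s + ENNReal.ofReal (ε : ℝ) := by
            rw [← ENNReal.ofReal_add (by positivity) (by positivity), add_halves]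
        _ = Gn ω s + (ε : ℝ≥0∞) := by rw [ENNReal.ofReal_coe_nnreal]
  have heq : (fun p : Ω × E => Gn p.1 p.2)
      = fun p : Ω × E => ⨅ s' : D, (Gn p.1 s' + (n : ℝ≥0∞) * edist p.2 s') := by
    funext p
    rw [repr p.1 p.2]
    exact iInf_subtype'
  show Measurable fun p : Ω × E => Gn p.1 p.2
  rw [heq]
  haveI : Countable ↥D := hDc.to_subtype
  refine Measurable.iInf fun s' => ?_
  refine Measurable.add ?_ ?_
  · exact (aux_measurable_iInf K hKne hKmeas _ (hcont s')).comp measurable_fst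
  · exact (((continuous_id.edist continuous_const).measurable).comp measurable_snd).const_mul _

/-- The sections `K(ω,s) = {x : (s,x) ∈ K ω}` of a random compact
set `K` in `E × ℝ^d` form a random compact set over the base
`(Ω × E, 𝓕 ⊗ 𝓑(E))`: each `K(ω,s)` is compact (possibly empty) and
`(ω,s) ↦ dist(x, K(ω,s))` is jointly measurable (with `dist(x,∅) = +∞`,
encoded via `EMetric.infEdist`).  Moreover, if `φ` is a cocycle over `θ×η`
such that `(s,x) ↦ (η ω s, φ 1 ω s x)` maps `K ω` onto `K (θ ω)` a.e., then
`φ(k,ω,s)(K(ω,s)) = K((θ×η)^k(ω,s))` for ℙ-a.e. `ω`, all `s` and all `k`. -/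
theorem sections_random_compact_and_invariant
    {Ω E : Type*} [MeasurableSpace Ω] [MetricSpace E] [CompactSpace E]
    [MeasurableSpace E] [BorelSpace E] (d : ℕ)
    (ℙ : Measure Ω) [IsProbabilityMeasure ℙ]
    (θ : Ω → Ω) (hθ : MeasurePreserving θ ℙ ℙ)
    (η : Ω → E → E) (hηhomeo : ∀ ω, IsHomeomorph (η ω))
    (hηmeas : Measurable fun p : Ω × E => η p.1 p.2)
    (T : Ω × E → Ω × E) (hT : ∀ p : Ω × E, T p = (θ p.1, η p.1 p.2))
    (φ : ℕ → Ω → E → EuclideanSpace ℝ (Fin d) → EuclideanSpace ℝ (Fin d))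
    (hφmeas : Measurable
      fun p : ℕ × Ω × E × EuclideanSpace ℝ (Fin d) => φ p.1 p.2.1 p.2.2.1 p.2.2.2)
    (hφ0 : ∀ ω s, φ 0 ω s = id)
    (hcocycle : ∀ (n m : ℕ) (ω : Ω) (s : E),
      φ (n + m) ω s = (φ n (T^[m] (ω, s)).1 (T^[m] (ω, s)).2) ∘ (φ m ω s))
    (K : Ω → Set (E × EuclideanSpace ℝ (Fin d)))
    (hKcpt : ∀ ω, IsCompact (K ω)) (hKne : ∀ ω, (K ω).Nonempty)
    (hKmeas : ∀ p : E × EuclideanSpace ℝ (Fin d),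
      Measurable fun ω => infDist p (K ω))
    (hKinv : ∀ᵐ ω ∂ℙ,
      (fun q : E × EuclideanSpace ℝ (Fin d) => (η ω q.1, φ 1 ω q.1 q.2)) '' K ω
        = K (θ ω)) :
    -- each section is compact
    (∀ (ω : Ω) (s : E), IsCompact {x | (s, x) ∈ K ω}) ∧
    -- joint measurability of the distance to the section (with `infEdist x ∅ = ⊤`)
    (∀ x : EuclideanSpace ℝ (Fin d),
      Measurable fun p : Ω × E => EMetric.infEdist x {y | (p.2, y) ∈ K p.1}) ∧
    -- invariance of the sections
    (∀ᵐ ω ∂ℙ, ∀ (s : E) (k : ℕ),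
      φ k ω s '' {x | (s, x) ∈ K ω}
        = {x | ((T^[k] (ω, s)).2, x) ∈ K (T^[k] (ω, s)).1}) := by
  haveI : Nonempty Ω := by
    by_contra h
    rw [not_nonempty_iff] at h
    have h1 := measure_univ (μ := ℙ)
    rw [Set.univ_eq_empty_iff.2 h] at h1
    simp at h1
  obtain ⟨ω₀⟩ := ‹Nonempty Ω›
  haveI : Nonempty E := ⟨((hKne ω₀).some).1⟩
  refine ⟨?_, ?_, ?_⟩
  · -- part 1: compactness of sections
    intro ω s
    have hset : {x | (s, x) ∈ K ω} = Prod.snd '' (K ω ∩ (Prod.fst ⁻¹' {s})) := by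
      ext y
      constructor
      · intro hy
        exact ⟨(s, y), ⟨hy, rfl⟩, rfl⟩
      · rintro ⟨q, ⟨hqK, hq1⟩, rfl⟩
        have hq1' : q.1 = s := hq1
        show (s, q.2) ∈ K ω
        rw [← hq1']
        exact hqK
    rw [hset]
    exact ((hKcpt ω).inter_right (isClosed_singleton.preimage continuous_fst)).image continuous_snd
  · -- part 2: joint measurability
    intro x
    have hform : (fun p : Ω × E => EMetric.infEdist x {y | (p.2, y) ∈ K p.1})
        = fun p : Ω × E => ⨆ n : ℕ, ⨅ q ∈ K p.1,
            (edist x q.2 + (n : ℝ≥0∞) * edist p.2 q.1) :=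
      funext fun p => aux_formula (hKcpt p.1) (hKne p.1) p.2 x
    rw [hform]
    exact Measurable.iSup fun n => aux_joint_meas K hKne hKmeas x n
  · -- part 3: invariance
    have hae : ∀ᵐ ω ∂ℙ, ∀ n : ℕ,
        (fun q : E × EuclideanSpace ℝ (Fin d) =>
            (η (θ^[n] ω) q.1, φ 1 (θ^[n] ω) q.1 q.2)) '' K (θ^[n] ω)
          = K (θ (θ^[n] ω)) := by
      rw [MeasureTheory.ae_all_iff]
      intro n
      exact ((hθ.iterate n).quasiMeasurePreserving).ae hKinv
    filter_upwards [hae] with ω H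
    have step : ∀ (n : ℕ) (s : E),
        φ 1 (θ^[n] ω) s '' {x | (s, x) ∈ K (θ^[n] ω)}
          = {x | (η (θ^[n] ω) s, x) ∈ K (θ (θ^[n] ω))} := by
      intro n s
      ext y
      simp only [Set.mem_image, Set.mem_setOf_eq]
      constructor
      · rintro ⟨x, hx, rfl⟩
        rw [← H n]
        exact ⟨(s, x), hx, rfl⟩
      · intro hy
        rw [← H n] at hy
        obtain ⟨q, hqK, heq⟩ := hy
        have h1 : η (θ^[n] ω) q.1 = η (θ^[n] ω) s := congrArg Prod.fst heq
        have h2 : q.1 = s := (hηhomeo _).isEmbedding.injective h1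
        refine ⟨q.2, ?_, ?_⟩
        · show (s, q.2) ∈ K (θ^[n] ω)
          rw [← h2]
          exact hqK
        · rw [← h2]
          exact congrArg Prod.snd heq
    have claim : ∀ (k j : ℕ) (s : E),
        φ k (θ^[j] ω) s '' {x | (s, x) ∈ K (θ^[j] ω)}
          = {x | ((T^[k] (θ^[j] ω, s)).2, x) ∈ K ((T^[k] (θ^[j] ω, s)).1)} := by
      intro k
      induction k with
      | zero =>
        intro j s
        simp [hφ0]
      | succ k ih =>
        intro j s
        have hTj : T (θ^[j] ω, s) = (θ^[j + 1] ω, η (θ^[j] ω) s) := by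
          simp [hT, Function.iterate_succ_apply']
        have hco : φ (k + 1) (θ^[j] ω) s
            = (φ k (θ^[j + 1] ω) (η (θ^[j] ω) s)) ∘ φ 1 (θ^[j] ω) s := by
          have h := hcocycle k 1 (θ^[j] ω) s
          rw [Function.iterate_one, hTj] at h
          exact h
        rw [hco, Set.image_comp, step j s, ← Function.iterate_succ_apply' θ j ω,
          ih (j + 1) (η (θ^[j] ω) s), Function.iterate_succ_apply T k, hTj]
    intro s k
    have := claim k 0 s
    simpa using this
end

section
/- Let E be a compact metric space, K a random compact set in E×ℝ^d over (Ω,𝓕) with sections K(ω,s) := {x ∈ ℝ^d : (s,x) ∈ K(ω)}, and let ρ : Ω → (0,∞) be measurable. Define N(ω,s) as the smallest number of open balls in ℝ^d of radius ρ(ω) centred at points of K(ω,s) that are needed to cover K(ω,s) (with N(ω,s) = 0 if K(ω,s) = ∅). Then N is 𝓕⊗𝓑(E)-measurable. -/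
open MeasureTheory Metric

section AuxCover
open Filter Topology

variable {E X : Type*} [MetricSpace E] [MetricSpace X] {C : Set (E × X)}
lemma aux_limit {E X : Type*} [MetricSpace E] [MetricSpace X]
    {C : Set (E × X)} (hC : IsCompact C) (hCne : C.Nonempty) (s : E)
    (a : ℕ → X) (h : ∀ j : ℕ, infDist (s, a j) C < 1 / ((j : ℝ) + 1)) :
    ∃ x : X, (s, x) ∈ C ∧ ∃ φ : ℕ → ℕ, StrictMono φ ∧
      Tendsto (fun j => a (φ j)) atTop (𝓝 x) := by
  choose p hpC hpd using fun j => (infDist_lt_iff hCne).mp (h j)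
  obtain ⟨c, hcC, φ, hφ, hconv⟩ := hC.tendsto_subseq hpC
  have hd0 : Tendsto (fun j : ℕ => (1 : ℝ) / ((φ j : ℝ) + 1)) atTop (𝓝 0) :=
    tendsto_one_div_add_atTop_nhds_zero_nat.comp hφ.tendsto_atTop
  have hdist0 : Tendsto (fun j => dist ((s, a (φ j)) : E × X) (p (φ j))) atTop (𝓝 0) :=
    squeeze_zero (fun j => dist_nonneg) (fun j => (hpd (φ j)).le) hd0
  have htend : Tendsto (fun j => ((s, a (φ j)) : E × X)) atTop (𝓝 c) :=
    Filter.Tendsto.congr_dist (f₁ := fun j => (p ∘ φ) j) hconv (by simpa [dist_comm] using hdist0)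
  have h1 : Tendsto (fun _ : ℕ => s) atTop (𝓝 c.1) := (continuous_fst.tendsto c).comp htend
  have hs : s = c.1 := tendsto_nhds_unique tendsto_const_nhds h1
  have h2 : Tendsto (fun j => a (φ j)) atTop (𝓝 c.2) := (continuous_snd.tendsto c).comp htend
  refine ⟨c.2, ?_, φ, hφ, h2⟩
  rw [hs]
  simpa using hcC

lemma one_div_succ_pos (n : ℕ) : (0:ℝ) < 1 / ((n:ℝ)+1) := by positivity

lemma infDist_prod_le (s : E) (x q : X) (hx : (s, x) ∈ C) :
    infDist (s, q) C ≤ dist q x := by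
  have hd : dist ((s, q) : E × X) (s, x) = dist q x := by
    simp [Prod.dist_eq, dist_nonneg]
  have h := infDist_le_infDist_add_dist (s := C) (x := ((s, q) : E × X)) (y := (s, x))
  rwa [infDist_zero_of_mem hx, hd, zero_add] at h

lemma aux_ne (hC : IsCompact C) (hCne : C.Nonempty) (s : E)
    (q : ℕ → X) (hq : DenseRange q) :
    {x | (s, x) ∈ C}.Nonempty ↔
      ∀ n : ℕ, ∃ k : ℕ, infDist (s, q k) C < 1 / ((n:ℝ)+1) := by
  constructor
  · rintro ⟨x, hx⟩ n
    obtain ⟨k, hk⟩ := hq.exists_dist_lt x (one_div_succ_pos n)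
    exact ⟨k, lt_of_le_of_lt (infDist_prod_le s x (q k) hx) (by rwa [dist_comm])⟩
  · intro hn
    choose k hk using hn
    obtain ⟨x, hx, -⟩ := aux_limit hC hCne s (fun n => q (k n)) hk
    exact ⟨x, hx⟩

lemma aux_phi (hC : IsCompact C) (hCne : C.Nonempty) (s : E)
    (q : ℕ → X) (hq : DenseRange q) (y : X) (ε : ℝ) :
    (∃ x, (s, x) ∈ C ∧ dist x y ≤ ε) ↔
      ∀ n : ℕ, ∃ k : ℕ, dist (q k) y < ε + 1 / ((n:ℝ)+1) ∧
        infDist (s, q k) C < 1 / ((n:ℝ)+1) := by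
  constructor
  · rintro ⟨x, hx, hxy⟩ n
    obtain ⟨k, hk⟩ := hq.exists_dist_lt x (one_div_succ_pos n)
    rw [dist_comm] at hk
    refine ⟨k, ?_, lt_of_le_of_lt (infDist_prod_le s x (q k) hx) hk⟩
    calc dist (q k) y ≤ dist (q k) x + dist x y := dist_triangle _ _ _
      _ < 1 / ((n:ℝ)+1) + ε := by linarith
      _ = ε + 1 / ((n:ℝ)+1) := by ring
  · intro hn
    choose k hk1 hk2 using hn
    obtain ⟨x, hx, φ, hφ, hconv⟩ := aux_limit hC hCne s (fun n => q (k n)) hk2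
    refine ⟨x, hx, ?_⟩
    have h1 : Tendsto (fun j => dist (q (k (φ j))) y) atTop (𝓝 (dist x y)) :=
      hconv.dist tendsto_const_nhds
    have h2 : Tendsto (fun j : ℕ => ε + 1 / ((φ j : ℝ) + 1)) atTop (𝓝 (ε + 0)) :=
      tendsto_const_nhds.add
        (tendsto_one_div_add_atTop_nhds_zero_nat.comp hφ.tendsto_atTop)
    have := le_of_tendsto_of_tendsto' h1 h2 (fun j => (hk1 (φ j)).le)
    simpa using this

lemma aux_cov (hC : IsCompact C) (hCne : C.Nonempty) (s : E)
    (q : ℕ → X) (hq : DenseRange q) {m : ℕ} (y : Fin m → X) {r : ℝ} (hr : 0 < r) :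
    {x | (s, x) ∈ C} ⊆ (⋃ i, ball (y i) r) ↔
      ∃ r' : ℚ, 0 < (r' : ℝ) ∧ (r' : ℝ) < r ∧ ∃ n : ℕ, ∀ k : ℕ,
        (∀ i, (r' : ℝ) < dist (q k) (y i)) → 1 / ((n:ℝ)+1) ≤ infDist (s, q k) C := by
  constructor
  · intro hcov
    by_contra hcon
    push_neg at hcon
    -- build a sequence
    have hsel : ∀ j : ℕ, ∃ k : ℕ, (∀ i, r - 1/((j:ℝ)+1) < dist (q k) (y i)) ∧
        infDist (s, q k) C < 1 / ((j:ℝ)+1) := by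
      intro j
      have hlt : max (r - 1/((j:ℝ)+1)) (r/2) < r := by
        have := one_div_succ_pos j
        apply max_lt <;> linarith
      obtain ⟨r', hr'1, hr'2⟩ := exists_rat_btwn hlt
      have hr'pos : 0 < (r' : ℝ) :=
        lt_trans (by linarith : (0:ℝ) < r/2) (lt_of_le_of_lt (le_max_right _ _) hr'1)
      obtain ⟨k, hk1, hk2⟩ := hcon r' hr'pos hr'2 j
      exact ⟨k, fun i => lt_of_le_of_lt (by
        calc r - 1/((j:ℝ)+1) ≤ max (r - 1/((j:ℝ)+1)) (r/2) := le_max_left _ _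
          _ ≤ (r':ℝ) := hr'1.le) (hk1 i), hk2⟩
    choose k hk1 hk2 using hsel
    obtain ⟨x, hx, φ, hφ, hconv⟩ := aux_limit hC hCne s (fun j => q (k j)) hk2
    obtain ⟨_, ⟨i, rfl⟩, hxi⟩ := hcov hx
    have h1 : Tendsto (fun j => dist (q (k (φ j))) (y i)) atTop (𝓝 (dist x (y i))) :=
      hconv.dist tendsto_const_nhds
    have h2 : Tendsto (fun j : ℕ => r - 1 / ((φ j : ℝ) + 1)) atTop (𝓝 (r - 0)) :=
      tendsto_const_nhds.sub
        (tendsto_one_div_add_atTop_nhds_zero_nat.comp hφ.tendsto_atTop)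
    have hge := le_of_tendsto_of_tendsto' h2 h1 (fun j => (hk1 (φ j) i).le)
    rw [sub_zero] at hge
    have hxi' : dist x (y i) < r := mem_ball.mp hxi
    linarith
  · rintro ⟨r', hr'pos, hr'lt, n, hn⟩ x hx
    by_contra hcon
    simp only [Set.mem_iUnion, mem_ball, not_exists, not_lt] at hcon
    have hε : 0 < min (1/((n:ℝ)+1)) (r - r') := lt_min (one_div_succ_pos n) (by linarith)
    obtain ⟨k, hk⟩ := hq.exists_dist_lt x hε
    rw [dist_comm] at hk
    have hx' : (s, x) ∈ C := hx
    have h1 : ∀ i, (r' : ℝ) < dist (q k) (y i) := by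
      intro i
      have h4 := hcon i
      have h3 : dist x (y i) ≤ dist (q k) x + dist (q k) (y i) := by
        rw [dist_comm (q k) x]; exact dist_triangle _ _ _
      have h2 : dist (q k) x < r - r' := lt_of_lt_of_le hk (min_le_right _ _)
      linarith
    have h5 := hn k h1
    have h6 := infDist_prod_le s x (q k) hx' 
    have h7 : dist (q k) x < 1/((n:ℝ)+1) := lt_of_lt_of_le hk (min_le_left _ _)
    linarith

lemma aux_sec_compact (hC : IsCompact C) (s : E) : IsCompact {x | (s, x) ∈ C} := by
  have h1 : IsCompact (C ∩ (Prod.fst ⁻¹' {s})) :=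
    hC.inter_right (isClosed_singleton.preimage continuous_fst)
  have h2 := h1.image continuous_snd
  convert h2 using 1
  ext x
  constructor
  · intro hx; exact ⟨(s, x), ⟨hx, rfl⟩, rfl⟩
  · rintro ⟨⟨s', x'⟩, ⟨hmem, hs⟩, rfl⟩
    simp only [Set.mem_preimage, Set.mem_singleton_iff] at hs
    simpa [hs] using hmem

lemma aux_main (hC : IsCompact C) (s : E)
    (q : ℕ → X) (hq : DenseRange q) {ρ : ℝ} (hρ : 0 < ρ) (m : ℕ) :
    sInf {m' : ℕ | ∃ t : Finset X, ↑t ⊆ {x | (s, x) ∈ C} ∧ t.card = m' ∧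
        {x | (s, x) ∈ C} ⊆ ⋃ y ∈ t, ball y ρ} ≤ m ↔
      (¬ {x | (s, x) ∈ C}.Nonempty) ∨
      ∃ r ε : ℚ, 0 < (r:ℝ) ∧ 0 < (ε:ℝ) ∧ (r:ℝ) + 3*(ε:ℝ) ≤ ρ ∧ ∃ v : Fin m → ℕ,
        (∀ i, ∃ x, (s, x) ∈ C ∧ dist x (q (v i)) ≤ (ε:ℝ)) ∧
        {x | (s, x) ∈ C} ⊆ ⋃ i, ball (q (v i)) (r:ℝ) := by
  classical
  set sec := {x | (s, x) ∈ C} with hsec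
  set S := {m' : ℕ | ∃ t : Finset X, ↑t ⊆ sec ∧ t.card = m' ∧
      sec ⊆ ⋃ y ∈ t, ball y ρ} with hS
  have seccpt : IsCompact sec := aux_sec_compact hC s
  have hSne : S.Nonempty := by
    obtain ⟨t, ht1, ht2⟩ :=
      seccpt.elim_nhds_subcover (fun x => ball x ρ) (fun x _ => ball_mem_nhds x hρ)
    exact ⟨t.card, t, fun x hx => ht1 x hx, rfl, ht2⟩
  constructor
  · intro hle
    by_cases hne : sec.Nonempty
    swap
    · exact Or.inl hne
    right
    obtain ⟨t, htsub, htcard, htcov⟩ := Nat.sInf_mem hSne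
    have htne : t.Nonempty := by
      obtain ⟨z, hz⟩ := hne
      obtain ⟨y, hyt, -⟩ := Set.mem_iUnion₂.mp (htcov hz)
      exact ⟨y, hyt⟩
    obtain ⟨x0, hx0⟩ := htne
    have hm1 : 1 ≤ m := le_trans (htcard ▸ Finset.card_pos.mpr ⟨x0, hx0⟩) hle
    set L := t.toList with hL
    have hLlen : L.length = t.card := Finset.length_toList t
    set xfun : Fin m → X := (fun i => if h : (i:ℕ) < L.length then L.get ⟨i, h⟩ else x0)
      with hxfun
    have hxt : ∀ i, xfun i ∈ t := by
      intro i
      by_cases h : (i:ℕ) < L.length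
      · simp only [hxfun, dif_pos h]
        exact Finset.mem_toList.mp (L.get_mem _)
      · simp only [hxfun, dif_neg h]; exact hx0
    have hxsec : ∀ i, (s, xfun i) ∈ C := fun i => htsub (hxt i)
    have hsurj : ∀ z ∈ t, ∃ i : Fin m, xfun i = z := by
      intro z hz
      obtain ⟨j, hjz⟩ := List.mem_iff_get.mp (Finset.mem_toList.mpr hz)
      have hjm : (j : ℕ) < m := lt_of_lt_of_le (hLlen ▸ j.isLt) (htcard ▸ hle)
      refine ⟨⟨j, hjm⟩, ?_⟩
      simp only [hxfun]
      rw [dif_pos (show ((⟨(j:ℕ), hjm⟩ : Fin m) : ℕ) < L.length from j.isLt)]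
      exact hjz
    set F := Set.range xfun with hF
    have hFne : F.Nonempty := ⟨xfun ⟨0, hm1⟩, Set.mem_range_self _⟩
    have hub : ∀ z ∈ sec, infDist z F < ρ := by
      intro z hz
      obtain ⟨y, hyt, hzy⟩ := Set.mem_iUnion₂.mp (htcov hz)
      obtain ⟨i, rfl⟩ := hsurj y hyt
      exact lt_of_le_of_lt (infDist_le_dist_of_mem (Set.mem_range_self i)) (mem_ball.mp hzy)
    obtain ⟨z0, hz0, hmax'⟩ :=
      seccpt.exists_isMaxOn hne (continuous_infDist_pt F).continuousOn
    have hmax : ∀ z ∈ sec, infDist z F ≤ infDist z0 F := fun z hz => hmax' hz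
    set c := ρ - infDist z0 F with hc
    have hcpos : 0 < c := by have := hub z0 hz0; simp only [hc]; linarith
    have hub2 : ∀ z ∈ sec, infDist z F ≤ ρ - c := by
      intro z hz; have := hmax z hz; simp only [hc]; linarith
    obtain ⟨ε, hε0, hε5⟩ := exists_rat_btwn (show (0:ℝ) < c/5 by linarith)
    have hεpos : 0 < (ε:ℝ) := hε0
    obtain ⟨r, hr1, hr2⟩ := exists_rat_btwn (show ρ - c + (ε:ℝ) < ρ - 3*(ε:ℝ) by linarith)
    have hile : (0:ℝ) ≤ infDist z0 F := infDist_nonneg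
    have hrpos : 0 < (r:ℝ) := by simp only [hc] at hr1 ⊢; linarith
    have hv : ∀ i : Fin m, ∃ k, dist (xfun i) (q k) < (ε:ℝ) :=
      fun i => hq.exists_dist_lt (xfun i) hεpos
    choose v hvlt using hv
    refine ⟨r, ε, hrpos, hεpos, by linarith, v, ?_, ?_⟩
    · intro i; exact ⟨xfun i, hxsec i, (hvlt i).le⟩
    · intro z hz
      have h1 : infDist z F < (r:ℝ) - (ε:ℝ) := lt_of_le_of_lt (hub2 z hz) (by linarith)
      obtain ⟨w, hwF, hw⟩ := (infDist_lt_iff hFne).mp h1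
      obtain ⟨i, rfl⟩ := hwF
      refine Set.mem_iUnion.mpr ⟨i, mem_ball.mpr ?_⟩
      calc dist z (q (v i)) ≤ dist z (xfun i) + dist (xfun i) (q (v i)) := dist_triangle _ _ _
        _ < ((r:ℝ) - ε) + ε := add_lt_add hw (hvlt i)
        _ = r := by ring
  · rintro (hemp | ⟨r, ε, hr, hε, hρ3, v, hΦ, hcov⟩)
    · have h0 : 0 ∈ S := by
        refine ⟨∅, by simp, by simp, fun z hz => absurd ⟨z, hz⟩ hemp⟩
      exact le_trans (Nat.sInf_le h0) (Nat.zero_le m)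
    · choose xx hxx1 hxx2 using hΦ
      have hmem : (Finset.image xx Finset.univ).card ∈ S := by
        refine ⟨Finset.image xx Finset.univ, ?_, rfl, ?_⟩
        · intro z hz
          obtain ⟨i, -, rfl⟩ := Finset.mem_image.mp hz
          exact hxx1 i
        · intro z hz
          obtain ⟨i, hzi⟩ := Set.mem_iUnion.mp (hcov hz)
          refine Set.mem_biUnion (Finset.mem_image.mpr ⟨i, Finset.mem_univ i, rfl⟩)
            (mem_ball.mpr ?_)
          have h3 : dist z (xx i) ≤ dist z (q (v i)) + dist (xx i) (q (v i)) := by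
            rw [dist_comm (xx i) (q (v i))]; exact dist_triangle _ _ _
          have h4 := mem_ball.mp hzi
          have h5 := hxx2 i
          linarith
      calc sInf S ≤ (Finset.image xx Finset.univ).card := Nat.sInf_le hmem
        _ ≤ (Finset.univ : Finset (Fin m)).card := Finset.card_image_le
        _ = m := by simp

end AuxCover

set_option maxHeartbeats 2000000 in
lemma aux_jm {Ω E X : Type*} [MeasurableSpace Ω] [MetricSpace E] [CompactSpace E]
    [MeasurableSpace E] [BorelSpace E] [MetricSpace X]
    (K : Ω → Set (E × X))
    (hKmeas : ∀ p : E × X, Measurable fun ω => infDist p (K ω)) (x : X) :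
    Measurable fun z : Ω × E => infDist (z.2, x) (K z.1) := by
  haveI : SecondCountableTopology E := inferInstance
  have hcont : ∀ ω : Ω, Continuous fun s : E => infDist ((s, x) : E × X) (K ω) :=
    fun ω => (continuous_infDist_pt _).comp (continuous_id.prodMk continuous_const)
  have h : Measurable (Function.uncurry fun (s : E) (ω : Ω) =>
      infDist ((s, x) : E × X) (K ω)) :=
    measurable_uncurry_of_continuous_of_measurable hcont (fun s => hKmeas (s, x))
  have h2 : Measurable fun z : Ω × E =>
      (Function.uncurry fun (s : E) (ω : Ω) => infDist ((s, x) : E × X) (K ω)) (z.2, z.1) :=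
    h.comp measurable_swap
  exact h2

set_option maxHeartbeats 2000000 in
/-- Let `K` be a random compact set in `E × ℝ^d` over `(Ω,𝓕)` with
sections `K(ω,s) = {x : (s,x) ∈ K ω}`, and `ρ : Ω → (0,∞)` measurable.  The
covering number `N(ω,s)`, the smallest number of open balls of radius `ρ ω`
centred at points of `K(ω,s)` needed to cover `K(ω,s)` (`0` for the empty
section), is `𝓕 ⊗ 𝓑(E)`-measurable. -/
theorem covering_number_measurable
    {Ω E : Type*} [MeasurableSpace Ω] [MetricSpace E] [CompactSpace E]
    [MeasurableSpace E] [BorelSpace E] (d : ℕ)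
    (K : Ω → Set (E × EuclideanSpace ℝ (Fin d)))
    (hKcpt : ∀ ω, IsCompact (K ω)) (hKne : ∀ ω, (K ω).Nonempty)
    (hKmeas : ∀ p : E × EuclideanSpace ℝ (Fin d),
      Measurable fun ω => infDist p (K ω))
    (ρ : Ω → ℝ) (hρmeas : Measurable ρ) (hρpos : ∀ ω, 0 < ρ ω)
    (N : Ω × E → ℕ)
    (hN : ∀ (ω : Ω) (s : E),
      N (ω, s) = sInf {m : ℕ | ∃ t : Finset (EuclideanSpace ℝ (Fin d)),
        ↑t ⊆ {x | (s, x) ∈ K ω} ∧ t.card = m ∧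
        {x | (s, x) ∈ K ω} ⊆ ⋃ y ∈ t, ball y (ρ ω)}) :
    Measurable N := by
  obtain ⟨q, hq⟩ : ∃ q : ℕ → EuclideanSpace ℝ (Fin d), DenseRange q :=
    ⟨TopologicalSpace.denseSeq _, TopologicalSpace.denseRange_denseSeq _⟩
  have hf : ∀ k : ℕ, Measurable fun z : Ω × E => infDist (z.2, q k) (K z.1) :=
    fun k => aux_jm K hKmeas (q k)
  have hlt : ∀ (k : ℕ) (c : ℝ),
      MeasurableSet {z : Ω × E | infDist (z.2, q k) (K z.1) < c} :=
    fun k c => measurableSet_lt (hf k) measurable_const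
  have hge : ∀ (k n : ℕ),
      MeasurableSet {z : Ω × E | 1/((n:ℝ)+1) ≤ infDist (z.2, q k) (K z.1)} :=
    fun k n => measurableSet_le measurable_const (hf k)
  have hMle : ∀ m : ℕ, MeasurableSet {z : Ω × E | N z ≤ m} := by
    intro m
    have heq : {z : Ω × E | N z ≤ m} =
        (⋂ (n : ℕ), ⋃ (k : ℕ),
          {z : Ω × E | infDist (z.2, q k) (K z.1) < 1/((n:ℝ)+1)})ᶜ ∪
        ⋃ (r : ℚ) (ε : ℚ) (_ : 0 < (r:ℝ)) (_ : 0 < (ε:ℝ)) (v : Fin m → ℕ),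
          ({z : Ω × E | (r:ℝ) + 3*(ε:ℝ) ≤ ρ z.1} ∩
           (⋂ (i : Fin m) (n : ℕ),
             ⋃ (k : ℕ) (_ : dist (q k) (q (v i)) < (ε:ℝ) + 1/((n:ℝ)+1)),
               {z : Ω × E | infDist (z.2, q k) (K z.1) < 1/((n:ℝ)+1)}) ∩
           (⋃ (r' : ℚ) (_ : 0 < (r':ℝ)) (_ : (r':ℝ) < (r:ℝ)) (n : ℕ),
             ⋂ (k : ℕ) (_ : ∀ i, (r':ℝ) < dist (q k) (q (v i))),
               {z : Ω × E | 1/((n:ℝ)+1) ≤ infDist (z.2, q k) (K z.1)})) := by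
      ext ⟨ω, s⟩
      simp only [Set.mem_setOf_eq, Set.mem_union, Set.mem_compl_iff, Set.mem_iInter,
        Set.mem_iUnion, Set.mem_inter_iff, not_forall, not_exists, exists_prop]
      rw [show N (ω, s) = N (ω, s) from rfl, hN ω s,
        aux_main (hKcpt ω) s q hq (hρpos ω) m]
      apply or_congr
      · rw [aux_ne (hKcpt ω) (hKne ω) s q hq]
        push_neg
        rfl
      · constructor
        · rintro ⟨r, ε, hr, hε, hρ3, v, hΦ, hcov⟩
          refine ⟨r, ε, hr, hε, v, ⟨hρ3, ?_⟩, ?_⟩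
          · intro i n
            obtain ⟨k, hk1, hk2⟩ :=
              (aux_phi (hKcpt ω) (hKne ω) s q hq (q (v i)) (ε:ℝ)).mp (hΦ i) n
            exact ⟨k, hk1, hk2⟩
          · obtain ⟨r', h1, h2, n, hn⟩ :=
              (aux_cov (hKcpt ω) (hKne ω) s q hq (fun i => q (v i)) hr).mp hcov
            exact ⟨r', h1, h2, n, hn⟩
        · rintro ⟨r, ε, hr, hε, v, ⟨hρ3, hΦ⟩, r', h1, h2, n, hn⟩
          refine ⟨r, ε, hr, hε, hρ3, v, ?_, ?_⟩
          · intro i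
            exact (aux_phi (hKcpt ω) (hKne ω) s q hq (q (v i)) (ε:ℝ)).mpr (hΦ i)
          · exact (aux_cov (hKcpt ω) (hKne ω) s q hq (fun i => q (v i)) hr).mpr
              ⟨r', h1, h2, n, hn⟩
    rw [heq]
    refine MeasurableSet.union ?_ ?_
    · exact (MeasurableSet.iInter fun n => MeasurableSet.iUnion fun k => hlt k _).compl
    · refine MeasurableSet.iUnion fun r => MeasurableSet.iUnion fun ε =>
        MeasurableSet.iUnion fun _ => MeasurableSet.iUnion fun _ =>
        MeasurableSet.iUnion fun v => MeasurableSet.inter (MeasurableSet.inter ?_ ?_) ?_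
      · exact measurableSet_le measurable_const (hρmeas.comp measurable_fst)
      · exact MeasurableSet.iInter fun i => MeasurableSet.iInter fun n =>
          MeasurableSet.iUnion fun k => MeasurableSet.iUnion fun _ => hlt k _
      · exact MeasurableSet.iUnion fun r' => MeasurableSet.iUnion fun _ =>
          MeasurableSet.iUnion fun _ => MeasurableSet.iUnion fun n =>
          MeasurableSet.iInter fun k => MeasurableSet.iInter fun _ => hge k n
  apply measurable_to_countable'
  intro n
  match n with
  | 0 =>
    have : N ⁻¹' {0} = {z : Ω × E | N z ≤ 0} := by
      ext z; simp [Nat.le_zero]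
    rw [this]; exact hMle 0
  | Nat.succ n =>
    have : N ⁻¹' {n+1} = {z : Ω × E | N z ≤ n+1} \ {z : Ω × E | N z ≤ n} := by
      ext z
      simp only [Set.mem_preimage, Set.mem_singleton_iff, Set.mem_diff, Set.mem_setOf_eq]
      omega
    rw [this]; exact (hMle (n+1)).diff (hMle n)
end

section
/- Let φ_1, …, φ_d : ℝ → ℝ^d be continuous functions with pairwise disjoint graphs (φ_i(s) ≠ φ_j(s) for all s ∈ ℝ whenever i ≠ j). Suppose that for every i ∈ {1,…,d} and every m ∈ ℕ there exists an index i_m ∈ {1,…,d} such that φ_i(s+m) = φ_{i_m}(s) for all s ∈ ℝ. Then every φ_i is periodic with some positive integer period τ_i ≤ d. -/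
/-- Let `φ 1, …, φ d : ℝ → ℝ^d` be continuous functions with pairwise
disjoint graphs.  If for every `i` and every `m : ℕ` there is an index `i_m` with
`φ i (s + m) = φ (i_m) s` for all `s`, then every `φ i` is periodic with some positive
integer period `τ i ≤ d`. -/
theorem periodic_of_shift_permutes
    (d : ℕ) (φ : Fin d → ℝ → EuclideanSpace ℝ (Fin d))
    (hcont : ∀ i, Continuous (φ i))
    (hdisj : ∀ i j, i ≠ j → ∀ s : ℝ, φ i s ≠ φ j s)
    (hshift : ∀ (i : Fin d) (m : ℕ), ∃ im : Fin d, ∀ s : ℝ, φ i (s + m) = φ im s) :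
    ∀ i : Fin d, ∃ τ : ℕ, 1 ≤ τ ∧ τ ≤ d ∧ ∀ s : ℝ, φ i (s + τ) = φ i s := by
  intro i
  choose g hg using hshift i
  have key : ∀ a b : ℕ, a < b → g a = g b → ∀ s : ℝ, φ i (s + ((b - a : ℕ) : ℝ)) = φ i s := by
    intro a b hlt heq s
    have hc : ((b - a : ℕ) : ℝ) = (b : ℝ) - a := by
      rw [Nat.cast_sub hlt.le]
    have h1 := hg b (s + ((b - a : ℕ) : ℝ) - b)
    have h2 := hg a (s + ((b - a : ℕ) : ℝ) - b)
    rw [heq] at h2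
    have e1 : s + ((b - a : ℕ) : ℝ) - b + b = s + ((b - a : ℕ) : ℝ) := by ring
    have e2 : s + ((b - a : ℕ) : ℝ) - b + a = s := by rw [hc]; ring
    rw [e1] at h1
    rw [e2] at h2
    rw [h1]
    exact h2.symm
  obtain ⟨a, b, hab, hfab⟩ :=
    Fintype.exists_ne_map_eq_of_card_lt (fun m : Fin (d + 1) => g m.1)
      (by simp)
  have hval : a.1 ≠ b.1 := fun e => hab (Fin.ext e)
  rcases hval.lt_or_gt with h | h
  · exact ⟨b.1 - a.1, by omega, by have := b.isLt; omega, key a.1 b.1 h hfab⟩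
  · exact ⟨a.1 - b.1, by omega, by have := a.isLt; omega, key b.1 a.1 h hfab.symm⟩
end
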